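/- arXiv:0810.3670 — 2 statements merged into one kernel-verified Lean document; each statement's English description precedes it below -/
import Mathlib

section
/- The map Γ from unlabeled one-factor two-chain covers on n elements to pairs of non-hitting walks of length n, sending a cover with greedy pair (λ,δ) to the walks (V,W) defined by stepping up at time i iff λ_i∈A (respectively δ_i∈A), is a bijection. -/
open scoped Classical

/-- A two-chain cover on `[n]`: a (strict) partial order on `Fin n` whose ground set is
partitioned into two chains, `A` and its complement `B = Aᶜ`. -/
structure TwoChainCover (n : ℕ) where
  lt : Fin n → Fin n → Prop
  irrefl : ∀ x, ¬lt x x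
  trans : ∀ x y z, lt x y → lt y z → lt x z
  A : Finset (Fin n)
  chainA : ∀ x ∈ A, ∀ y ∈ A, x ≠ y → lt x y ∨ lt y x
  chainB : ∀ x y : Fin n, x ∉ A → y ∉ A → x ≠ y → lt x y ∨ lt y x

namespace TwoChainCover

variable {n : ℕ}

/-- The incomparability graph of a two-chain cover: `x ∼ y` iff `x ≠ y` and `x, y` are
incomparable in the partial order. -/
def incompGraph (C : TwoChainCover n) : SimpleGraph (Fin n) where
  Adj x y := x ≠ y ∧ ¬C.lt x y ∧ ¬C.lt y x
  symm := by constructor; intro x y h; exact ⟨h.1.symm, h.2.2, h.2.1⟩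
  loopless := by constructor; intro x h; exact h.1 rfl

/-- A two-chain cover has one factor if its incomparability graph is connected. -/
def OneFactor (C : TwoChainCover n) : Prop := C.incompGraph.Connected

/-- `(λ, δ)` is the greedy pair of linear orders of the cover `C`: both are linear
extensions of the partial order (here given as equivs `Fin n ≃ Fin n`, where `λ i` is the
element in position `i`, so that `λ.symm` records ranks), and every incomparable pair
`a ∈ A`, `b ∈ B` is resolved as `a` before `b` in `λ` and `b` before `a` in `δ`. -/
def GreedyPair (C : TwoChainCover n) (lam del : Fin n ≃ Fin n) : Prop :=
  (∀ x y, C.lt x y → lam.symm x < lam.symm y) ∧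
  (∀ x y, C.lt x y → del.symm x < del.symm y) ∧
  (∀ a ∈ C.A, ∀ b : Fin n, b ∉ C.A → ¬C.lt a b → ¬C.lt b a →
    lam.symm a < lam.symm b ∧ del.symm b < del.symm a)

/-- The walk associated with a linear order `e` (so `Γ(C) = (walk C λ, walk C δ)`): at
step `i + 1` the walk goes up if the element in position `i` lies in the chain `A`, and
down otherwise. -/
def walk (C : TwoChainCover n) (e : Fin n ≃ Fin n) : ℕ → ℤ := fun t =>
  ∑ i ∈ Finset.univ.filter (fun i : Fin n => (i : ℕ) < t),
    (if e i ∈ C.A then (1 : ℤ) else -1)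

/-- The incomparability window of `c`: the number of elements incomparable to `c`. -/
noncomputable def window (C : TwoChainCover n) (c : Fin n) : ℕ :=
  (Finset.univ.filter fun y : Fin n => y ≠ c ∧ ¬C.lt y c ∧ ¬C.lt c y).card

/-- `τ(c)`: the number of elements `y ⪯ c`. -/
noncomputable def tau (C : TwoChainCover n) (c : Fin n) : ℕ :=
  (Finset.univ.filter fun y : Fin n => C.lt y c ∨ y = c).card

/-- The rank of `a` within the chain `A` (so `a = a_i` with `i = rankA C a`). -/
noncomputable def rankA (C : TwoChainCover n) (a : Fin n) : ℕ :=
  (Finset.univ.filter fun y : Fin n => y ∈ C.A ∧ C.lt y a).card + 1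

/-- The rank of `b` within the chain `B = Aᶜ` (so `b = b_j` with `j = rankB C b`). -/
noncomputable def rankB (C : TwoChainCover n) (b : Fin n) : ℕ :=
  (Finset.univ.filter fun y : Fin n => y ∉ C.A ∧ C.lt y b).card + 1

/-- The first time the walk associated with `e` has taken `i` up-steps. -/
noncomputable def tUp (C : TwoChainCover n) (e : Fin n ≃ Fin n) (i : ℕ) : ℕ :=
  sInf {t : ℕ | i ≤ (Finset.univ.filter fun j : Fin n => (j : ℕ) < t ∧ e j ∈ C.A).card}

/-- The first time the walk associated with `e` has taken `j` down-steps. -/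
noncomputable def tDown (C : TwoChainCover n) (e : Fin n ≃ Fin n) (j : ℕ) : ℕ :=
  sInf {t : ℕ | j ≤ (Finset.univ.filter fun i : Fin n => (i : ℕ) < t ∧ e i ∉ C.A).card}

end TwoChainCover

/-- A pair of non-hitting walks of length `n` on the integers:
`V 0 = W 0 = 0`, all steps are `±1`, `V n = W n`, and `V t > W t` for `0 < t < n`. -/
def IsNonHitting (n : ℕ) (V W : ℕ → ℤ) : Prop :=
  V 0 = 0 ∧ W 0 = 0 ∧
    (∀ t < n, (V (t + 1) - V t = 1 ∨ V (t + 1) - V t = -1) ∧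
      (W (t + 1) - W t = 1 ∨ W (t + 1) - W t = -1)) ∧
    V n = W n ∧ (∀ t, 0 < t → t < n → W t < V t)

/-- Isomorphism of two-chain covers: a relabelling of the ground set preserving the
partial order and the two chains. -/
def CoverIso {n : ℕ} (C C' : TwoChainCover n) : Prop :=
  ∃ e : Fin n ≃ Fin n,
    (∀ x y, C.lt x y ↔ C'.lt (e x) (e y)) ∧ (∀ x, x ∈ C.A ↔ e x ∈ C'.A)


namespace Gamma
open Finset

/-! ### Generic up-step counting for integer walks -/

noncomputable def ups (V : ℕ → ℤ) (t : ℕ) : ℕ :=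
  ((Finset.range t).filter (fun s => V (s+1) - V s = 1)).card

lemma ups_zero (V : ℕ → ℤ) : ups V 0 = 0 := by simp [ups]

lemma ups_succ (V : ℕ → ℤ) (t : ℕ) :
    ups V (t+1) = ups V t + (if V (t+1) - V t = 1 then 1 else 0) := by
  unfold ups
  rw [Finset.range_add_one, Finset.filter_insert]
  split <;> simp [Finset.card_insert_of_notMem]

lemma ups_mono (V : ℕ → ℤ) : Monotone (ups V) := by
  intro a b hab
  exact Finset.card_le_card (Finset.filter_subset_filter _ (by simpa using hab))

lemma ups_le (V : ℕ → ℤ) (t : ℕ) : ups V t ≤ t := by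
  simpa [ups] using Finset.card_le_card (Finset.filter_subset _ (Finset.range t))

lemma ups_lipschitz (V : ℕ → ℤ) (a b : ℕ) (hab : a ≤ b) : ups V b ≤ ups V a + (b - a) := by
  unfold ups
  have : (Finset.range b).filter (fun s => V (s+1) - V s = 1) ⊆
      ((Finset.range a).filter (fun s => V (s+1) - V s = 1)) ∪ (Finset.Ico a b) := by
    intro s hs
    simp only [Finset.mem_filter, Finset.mem_range, Finset.mem_union, Finset.mem_Ico] at *
    omega
  calc _ ≤ _ := Finset.card_le_card this
    _ ≤ _ := Finset.card_union_le _ _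
    _ ≤ _ := by simp [Nat.card_Ico]

lemma lt_of_ups_lt (V : ℕ → ℤ) {a b : ℕ} (h : ups V a < ups V b) : a < b := by
  by_contra hc
  exact absurd (ups_mono V (not_lt.mp hc)) (by omega)

noncomputable def downs (V : ℕ → ℤ) (t : ℕ) : ℕ := t - ups V t

lemma lt_of_downs_lt (V : ℕ → ℤ) {a b : ℕ} (h : downs V a < downs V b) : a < b := by
  by_contra hc
  push_neg at hc
  have := ups_lipschitz V b a hc
  have h1 := ups_le V a
  have h2 := ups_le V b
  unfold downs at h
  omega

lemma val_eq (V : ℕ → ℤ) (hV0 : V 0 = 0) {n : ℕ}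
    (hstep : ∀ t < n, V (t+1) - V t = 1 ∨ V (t+1) - V t = -1) :
    ∀ t ≤ n, V t = 2 * (ups V t : ℤ) - t := by
  intro t
  induction t with
  | zero => simp [hV0, ups_zero]
  | succ t ih =>
    intro ht
    have h1 := ih (by omega)
    have h2 := hstep t (by omega)
    rw [ups_succ]
    rcases h2 with h | h <;> simp [h] <;> omega

/-! ### Consequences of non-hitting -/

section NH
variable {n : ℕ} {V W : ℕ → ℤ} (h : IsNonHitting n V W)
include h

lemma valV : ∀ t ≤ n, V t = 2 * (ups V t : ℤ) - t :=
  val_eq V h.1 (fun t ht => (h.2.2.1 t ht).1)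

lemma valW : ∀ t ≤ n, W t = 2 * (ups W t : ℤ) - t :=
  val_eq W h.2.1 (fun t ht => (h.2.2.1 t ht).2)

lemma upsW_n : ups W n = ups V n := by
  have h1 := valV h n le_rfl
  have h2 := valW h n le_rfl
  have := h.2.2.2.1
  omega

lemma key : ∀ s, 0 < s → s < n → ups W s < ups V s := by
  intro s hs1 hs2
  have h1 := valV h s (by omega)
  have h2 := valW h s (by omega)
  have := h.2.2.2.2 s hs1 hs2
  omega

lemma upsW_le_upsV : ∀ s ≤ n, ups W s ≤ ups V s := by
  intro s hs
  rcases Nat.eq_zero_or_pos s with rfl | h0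
  · simp [ups_zero]
  rcases eq_or_lt_of_le hs with rfl | hlt
  · exact (upsW_n h).le
  · exact (key h s h0 hlt).le

lemma upsV_n_le : ups V n ≤ n := ups_le V n

/-- `a_i < b_j` cannot occur together with `b_j < a_i` -/
lemma not_both {i j : ℕ} (hi : i < ups V n) (hj : j < n - ups V n)
    (hab : i < ups W (i + j + 1)) (hba : ups V (i + j + 1) ≤ i) : False := by
  have hs := key h (i + j + 1) (by omega) (by have := upsV_n_le h; omega)
  omega

end NH

lemma AB_mono_i {W : ℕ → ℤ} {i i' j : ℕ} (hii : i' ≤ i) (hab : i < ups W (i + j + 1)) :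
    i' < ups W (i' + j + 1) := by
  have := ups_lipschitz W (i' + j + 1) (i + j + 1) (by omega)
  omega

lemma BA_mono_i {V : ℕ → ℤ} {i i' j : ℕ} (hii : i ≤ i') (hba : ups V (i + j + 1) ≤ i) :
    ups V (i' + j + 1) ≤ i' := by
  have := ups_lipschitz V (i + j + 1) (i' + j + 1) (by omega)
  omega

section NH2
variable {n : ℕ} {V W : ℕ → ℤ} (h : IsNonHitting n V W)
include h

lemma AB_BA {i i' j : ℕ} (hi' : i' < ups V n) (hj : j < n - ups V n)
    (hab : i < ups W (i + j + 1)) (hba : ups V (i' + j + 1) ≤ i') : i < i' := by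
  by_contra hc
  exact not_both h hi' hj (AB_mono_i (by omega) hab) hba

lemma BA_AB {i j j' : ℕ} (hi : i < ups V n) (hj' : j' < n - ups V n)
    (hba : ups V (i + j + 1) ≤ i) (hab : i < ups W (i + j' + 1)) : j < j' := by
  by_contra hc
  have : ups V (i + j' + 1) ≤ ups V (i + j + 1) := ups_mono V (by omega)
  exact not_both h hi hj' hab (by omega)

end NH2

/-! ### The canonical cover -/

noncomputable def mkCover (n : ℕ) (V W : ℕ → ℤ) (h : IsNonHitting n V W) : TwoChainCover n where
  lt x y :=
      ((x:ℕ) < ups V n ∧ (y:ℕ) < ups V n ∧ (x:ℕ) < (y:ℕ)) ∨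
      (ups V n ≤ (x:ℕ) ∧ ups V n ≤ (y:ℕ) ∧ (x:ℕ) < (y:ℕ)) ∨
      ((x:ℕ) < ups V n ∧ ups V n ≤ (y:ℕ) ∧ (x:ℕ) < ups W ((x:ℕ) + ((y:ℕ) - ups V n) + 1)) ∨
      (ups V n ≤ (x:ℕ) ∧ (y:ℕ) < ups V n ∧ ups V ((y:ℕ) + ((x:ℕ) - ups V n) + 1) ≤ (y:ℕ))
  irrefl := by intro x; omega
  trans := by
    intro x y z hxy hyz
    set p := ups V n with hp
    have hxn : (x:ℕ) < n := x.isLt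
    have hyn : (y:ℕ) < n := y.isLt
    have hzn : (z:ℕ) < n := z.isLt
    have hpn : p ≤ n := upsV_n_le h
    rcases Nat.lt_or_ge (x:ℕ) p with hx | hx <;>
      rcases Nat.lt_or_ge (y:ℕ) p with hy | hy <;>
        rcases Nat.lt_or_ge (z:ℕ) p with hz | hz
    -- AAA
    · left; omega
    -- AAB
    · have h2 : (y:ℕ) < ups W ((y:ℕ) + ((z:ℕ) - p) + 1) := by omega
      have := AB_mono_i (W := W) (i := (y:ℕ)) (i' := (x:ℕ)) (j := (z:ℕ) - p) (by omega) h2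
      right; right; left
      exact ⟨hx, hz, this⟩
    -- ABA
    · have h1 : (x:ℕ) < ups W ((x:ℕ) + ((y:ℕ) - p) + 1) := by omega
      have h2 : ups V ((z:ℕ) + ((y:ℕ) - p) + 1) ≤ (z:ℕ) := by omega
      have := AB_BA h hz (by omega) h1 h2
      left; omega
    -- ABB
    · have h1 : (x:ℕ) < ups W ((x:ℕ) + ((y:ℕ) - p) + 1) := by omega
      have h2 : ups W ((x:ℕ) + ((y:ℕ) - p) + 1) ≤ ups W ((x:ℕ) + ((z:ℕ) - p) + 1) :=
        ups_mono W (by omega)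
      right; right; left
      exact ⟨hx, by omega, by omega⟩
    -- BAA
    · have h1 : ups V ((y:ℕ) + ((x:ℕ) - p) + 1) ≤ (y:ℕ) := by omega
      have := BA_mono_i (V := V) (i := (y:ℕ)) (i' := (z:ℕ)) (j := (x:ℕ) - p) (by omega) h1
      right; right; right
      exact ⟨hx, hz, this⟩
    -- BAB
    · have h1 : ups V ((y:ℕ) + ((x:ℕ) - p) + 1) ≤ (y:ℕ) := by omega
      have h2 : (y:ℕ) < ups W ((y:ℕ) + ((z:ℕ) - p) + 1) := by omega
      have := BA_AB h (by omega) (by omega) h1 h2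
      right; left; omega
    -- BBA
    · have h1 : ups V ((z:ℕ) + ((y:ℕ) - p) + 1) ≤ (z:ℕ) := by omega
      have h2 : ups V ((z:ℕ) + ((x:ℕ) - p) + 1) ≤ ups V ((z:ℕ) + ((y:ℕ) - p) + 1) :=
        ups_mono V (by omega)
      right; right; right
      exact ⟨by omega, hz, by omega⟩
    -- BBB
    · right; left; omega
  A := Finset.univ.filter (fun x => (x:ℕ) < ups V n)
  chainA := by
    intro x hx y hy hxy
    simp only [Finset.mem_filter] at hx hy
    have : (x:ℕ) ≠ (y:ℕ) := fun hc => hxy (Fin.ext hc)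
    rcases Nat.lt_or_ge (x:ℕ) (y:ℕ) with hc | hc
    · left; left; exact ⟨hx.2, hy.2, hc⟩
    · right; left; exact ⟨hy.2, hx.2, by omega⟩
  chainB := by
    intro x y hx hy hxy
    simp only [Finset.mem_filter, Finset.mem_univ, true_and, not_lt] at hx hy
    have : (x:ℕ) ≠ (y:ℕ) := fun hc => hxy (Fin.ext hc)
    rcases Nat.lt_or_ge (x:ℕ) (y:ℕ) with hc | hc
    · left; right; left; exact ⟨hx, hy, hc⟩
    · right; right; left; exact ⟨hy, hx, by omega⟩

/-! ### The canonical linear orders -/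

lemma downs_mono (V : ℕ → ℤ) : Monotone (downs V) := by
  intro a b hab
  have := ups_lipschitz V a b hab
  have := ups_le V a
  unfold downs
  omega

lemma ups_succ_up {V : ℕ → ℤ} {k : ℕ} (hk : V (k+1) - V k = 1) :
    ups V (k+1) = ups V k + 1 := by rw [ups_succ, if_pos hk]

lemma ups_succ_down {V : ℕ → ℤ} {k : ℕ} (hk : ¬(V (k+1) - V k = 1)) :
    ups V (k+1) = ups V k := by rw [ups_succ, if_neg hk]; ring

lemma downs_succ_down {V : ℕ → ℤ} {k : ℕ} (hk : ¬(V (k+1) - V k = 1)) :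
    downs V (k+1) = downs V k + 1 := by
  have := ups_succ_down hk
  have := ups_le V k
  unfold downs
  omega

noncomputable def permFun (n : ℕ) (V : ℕ → ℤ) (k : Fin n) : Fin n :=
  if hs : V ((k:ℕ)+1) - V (k:ℕ) = 1 then
    ⟨ups V (k:ℕ), by
      have h1 := ups_succ_up hs
      have h2 : ups V ((k:ℕ)+1) ≤ ups V n := ups_mono V k.isLt
      have h3 := ups_le V n
      omega⟩
  else
    ⟨ups V n + ((k:ℕ) - ups V (k:ℕ)), by
      have h1 := downs_succ_down hs
      have h2 : downs V ((k:ℕ)+1) ≤ downs V n := downs_mono V k.isLt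
      have h3 := ups_le V (k:ℕ)
      have h4 := ups_le V n
      unfold downs at *
      omega⟩

lemma permFun_injective (n : ℕ) (V : ℕ → ℤ) : Function.Injective (permFun n V) := by
  intro k k' he
  by_contra hne
  have hv : (k:ℕ) ≠ (k':ℕ) := fun hc => hne (Fin.ext hc)
  wlog hlt : (k:ℕ) < (k':ℕ) generalizing k k'
  · exact this he.symm (Ne.symm hne) (Ne.symm hv) (by omega)
  unfold permFun at he
  by_cases h1 : V ((k:ℕ)+1) - V (k:ℕ) = 1 <;> by_cases h2 : V ((k':ℕ)+1) - V (k':ℕ) = 1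
  · rw [dif_pos h1, dif_pos h2] at he
    have hval : ups V (k:ℕ) = ups V (k':ℕ) := by simpa [Fin.ext_iff] using he
    have := ups_succ_up h1
    have : ups V ((k:ℕ)+1) ≤ ups V (k':ℕ) := ups_mono V (by omega)
    omega
  · rw [dif_pos h1, dif_neg h2] at he
    have hval : ups V (k:ℕ) = ups V n + ((k':ℕ) - ups V (k':ℕ)) := by
      simpa [Fin.ext_iff] using he
    have h3 := ups_succ_up h1
    have h4 : ups V ((k:ℕ)+1) ≤ ups V n := ups_mono V k.isLt
    omega
  · rw [dif_neg h1, dif_pos h2] at he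
    have hval : ups V n + ((k:ℕ) - ups V (k:ℕ)) = ups V (k':ℕ) := by
      simpa [Fin.ext_iff] using he
    have h3 := ups_succ_up h2
    have h4 : ups V ((k':ℕ)+1) ≤ ups V n := ups_mono V k'.isLt
    omega
  · rw [dif_neg h1, dif_neg h2] at he
    have hval : (k:ℕ) - ups V (k:ℕ) = (k':ℕ) - ups V (k':ℕ) := by
      simpa [Fin.ext_iff] using he
    have h3 := downs_succ_down h1
    have h4 : downs V ((k:ℕ)+1) ≤ downs V (k':ℕ) := downs_mono V (by omega)
    have h5 := ups_le V (k:ℕ)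
    have h6 := ups_le V (k':ℕ)
    unfold downs at *
    omega

noncomputable def perm (n : ℕ) (V : ℕ → ℤ) : Fin n ≃ Fin n :=
  Equiv.ofBijective (permFun n V)
    ((Finite.injective_iff_bijective).mp (permFun_injective n V))

lemma perm_apply (n : ℕ) (V : ℕ → ℤ) (k : Fin n) : perm n V k = permFun n V k := rfl

/-- characterization of `(perm n V).symm` on A-side elements -/
lemma perm_symm_A {n : ℕ} {V : ℕ → ℤ} {x : Fin n} (hx : (x:ℕ) < ups V n) :
    V (((perm n V).symm x : ℕ)+1) - V ((perm n V).symm x : ℕ) = 1 ∧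
      ups V ((perm n V).symm x : ℕ) = (x:ℕ) := by
  set k := (perm n V).symm x with hk
  have he : permFun n V k = x := (perm n V).apply_symm_apply x
  by_cases hs : V ((k:ℕ)+1) - V (k:ℕ) = 1
  · refine ⟨hs, ?_⟩
    rw [permFun, dif_pos hs] at he
    simpa [Fin.ext_iff] using he
  · exfalso
    rw [permFun, dif_neg hs] at he
    have : ups V n + ((k:ℕ) - ups V (k:ℕ)) = (x:ℕ) := by simpa [Fin.ext_iff] using he
    omega

lemma perm_symm_B {n : ℕ} {V : ℕ → ℤ} {x : Fin n} (hx : ups V n ≤ (x:ℕ)) :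
    ¬(V (((perm n V).symm x : ℕ)+1) - V ((perm n V).symm x : ℕ) = 1) ∧
      ((perm n V).symm x : ℕ) - ups V ((perm n V).symm x : ℕ) = (x:ℕ) - ups V n := by
  set k := (perm n V).symm x with hk
  have he : permFun n V k = x := (perm n V).apply_symm_apply x
  by_cases hs : V ((k:ℕ)+1) - V (k:ℕ) = 1
  · exfalso
    rw [permFun, dif_pos hs] at he
    have h1 : ups V (k:ℕ) = (x:ℕ) := by simpa [Fin.ext_iff] using he
    have h2 := ups_succ_up hs
    have h3 : ups V ((k:ℕ)+1) ≤ ups V n := ups_mono V k.isLt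
    omega
  · refine ⟨hs, ?_⟩
    rw [permFun, dif_neg hs] at he
    have : ups V n + ((k:ℕ) - ups V (k:ℕ)) = (x:ℕ) := by simpa [Fin.ext_iff] using he
    omega

section PermOrder
variable {n : ℕ} {V : ℕ → ℤ} {x y : Fin n}

lemma perm_lt_AA (hx : (x:ℕ) < ups V n) (hy : (y:ℕ) < ups V n) (hxy : (x:ℕ) < (y:ℕ)) :
    (perm n V).symm x < (perm n V).symm y := by
  have h1 := perm_symm_A hx
  have h2 := perm_symm_A hy
  exact lt_of_ups_lt V (by omega)

lemma perm_lt_BB (hx : ups V n ≤ (x:ℕ)) (hy : ups V n ≤ (y:ℕ)) (hxy : (x:ℕ) < (y:ℕ)) :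
    (perm n V).symm x < (perm n V).symm y := by
  have h1 := perm_symm_B hx
  have h2 := perm_symm_B hy
  have h3 := ups_le V ((perm n V).symm x : ℕ)
  have h4 := ups_le V ((perm n V).symm y : ℕ)
  refine lt_of_downs_lt V ?_
  unfold downs
  omega

/-- if `x` is an A-element, `y` a B-element, and the `V`-count witnesses `x` before `y`,
then `x` comes before `y` in `perm n V`. -/
lemma perm_lt_AB (hx : (x:ℕ) < ups V n) (hy : ups V n ≤ (y:ℕ))
    (hc : (x:ℕ) < ups V ((x:ℕ) + ((y:ℕ) - ups V n) + 1)) :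
    (perm n V).symm x < (perm n V).symm y := by
  set s := (x:ℕ) + ((y:ℕ) - ups V n) + 1 with hs
  have h1 := perm_symm_A hx
  have h2 := perm_symm_B hy
  set k := (perm n V).symm x
  set k' := (perm n V).symm y
  have hk : (k:ℕ) < s := lt_of_ups_lt V (by omega)
  have hks : s ≤ (k':ℕ) := by
    have hdown := downs_succ_down h2.1
    have h5 := ups_le V s
    have h6 := ups_le V ((k':ℕ))
    have : downs V s < downs V ((k':ℕ)+1) := by
      unfold downs at *
      omega
    have := lt_of_downs_lt V this
    omega
  exact Fin.lt_def.mpr (by omega)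

lemma perm_lt_BA (hx : ups V n ≤ (x:ℕ)) (hy : (y:ℕ) < ups V n)
    (hc : ups V ((y:ℕ) + ((x:ℕ) - ups V n) + 1) ≤ (y:ℕ)) :
    (perm n V).symm x < (perm n V).symm y := by
  set s := (y:ℕ) + ((x:ℕ) - ups V n) + 1 with hs
  have h1 := perm_symm_B hx
  have h2 := perm_symm_A hy
  set k' := (perm n V).symm x
  set k := (perm n V).symm y
  have hks : s ≤ (k:ℕ) := by
    have hup := ups_succ_up h2.1
    have : ups V s < ups V ((k:ℕ)+1) := by omega
    have := lt_of_ups_lt V this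
    omega
  have hk : (k':ℕ) < s := by
    have h5 := ups_le V s
    have h6 := ups_le V ((k':ℕ))
    have : downs V (k':ℕ) < downs V s := by
      unfold downs at *
      omega
    exact lt_of_downs_lt V this
  exact Fin.lt_def.mpr (by omega)

end PermOrder

/-! ### Generic walk lemmas -/
open TwoChainCover

lemma filter_lt_succ {n t : ℕ} (ht : t < n) :
    (Finset.univ.filter fun k : Fin n => (k:ℕ) < t+1) =
      insert ⟨t, ht⟩ (Finset.univ.filter fun k : Fin n => (k:ℕ) < t) := by
  ext k
  simp only [Finset.mem_filter, Finset.mem_univ, true_and, Finset.mem_insert, Fin.ext_iff]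
  omega

lemma walk_zero {n : ℕ} (C : TwoChainCover n) (e : Fin n ≃ Fin n) : C.walk e 0 = 0 := by
  simp [walk]

lemma walk_succ {n : ℕ} (C : TwoChainCover n) (e : Fin n ≃ Fin n) {t : ℕ} (ht : t < n) :
    C.walk e (t+1) = C.walk e t + (if e ⟨t, ht⟩ ∈ C.A then 1 else -1) := by
  unfold walk
  rw [filter_lt_succ ht, Finset.sum_insert (by simp)]
  ring

lemma card_filter_lt {n : ℕ} : ∀ {t : ℕ}, t ≤ n →
    (Finset.univ.filter fun k : Fin n => (k:ℕ) < t).card = t := by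
  intro t
  induction t with
  | zero => intro _; simp
  | succ t ih =>
    intro ht
    rw [filter_lt_succ (by omega), Finset.card_insert_of_notMem (by simp), ih (by omega)]

lemma walk_n {n : ℕ} (C : TwoChainCover n) (e : Fin n ≃ Fin n) :
    C.walk e n = ∑ x, (if x ∈ C.A then (1:ℤ) else -1) := by
  unfold walk
  rw [show (Finset.univ.filter fun k : Fin n => (k:ℕ) < n) = Finset.univ by
    ext k; simp [k.isLt]]
  exact Equiv.sum_comp e (fun x => if x ∈ C.A then (1:ℤ) else -1)

/-- prefix count of A-elements -/
noncomputable def aCnt {n : ℕ} (C : TwoChainCover n) (e : Fin n ≃ Fin n) (t : ℕ) : ℕ :=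
  (Finset.univ.filter fun k : Fin n => (k:ℕ) < t ∧ e k ∈ C.A).card

lemma aCnt_succ {n : ℕ} (C : TwoChainCover n) (e : Fin n ≃ Fin n) {t : ℕ} (ht : t < n) :
    aCnt C e (t+1) = aCnt C e t + (if e ⟨t, ht⟩ ∈ C.A then 1 else 0) := by
  unfold aCnt
  split
  · rw [show (Finset.univ.filter fun k : Fin n => (k:ℕ) < t+1 ∧ e k ∈ C.A) =
        insert ⟨t, ht⟩ (Finset.univ.filter fun k : Fin n => (k:ℕ) < t ∧ e k ∈ C.A) by
      ext k
      simp only [Finset.mem_filter, Finset.mem_univ, true_and, Finset.mem_insert, Fin.ext_iff]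
      constructor
      · rintro ⟨h1, h2⟩
        rcases Nat.lt_or_ge (k:ℕ) t with hc | hc
        · exact Or.inr ⟨hc, h2⟩
        · left; omega
      · rintro (h1 | ⟨h1, h2⟩)
        · refine ⟨by omega, ?_⟩
          have : k = (⟨t, ht⟩ : Fin n) := by
            apply Fin.ext; simp only [Fin.val_mk]; omega
          rw [this]; assumption
        · exact ⟨by omega, h2⟩]
    rw [Finset.card_insert_of_notMem (by simp)]
  · rw [show (Finset.univ.filter fun k : Fin n => (k:ℕ) < t+1 ∧ e k ∈ C.A) =
        (Finset.univ.filter fun k : Fin n => (k:ℕ) < t ∧ e k ∈ C.A) by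
      ext k
      simp only [Finset.mem_filter, Finset.mem_univ, true_and]
      constructor
      · rintro ⟨h1, h2⟩
        refine ⟨?_, h2⟩
        rcases Nat.lt_or_ge (k:ℕ) t with hc | hc
        · exact hc
        · exfalso
          have : k = (⟨t, ht⟩ : Fin n) := by
            apply Fin.ext; simp only [Fin.val_mk]; omega
          rw [this] at h2; exact absurd h2 (by assumption)
      · rintro ⟨h1, h2⟩; exact ⟨by omega, h2⟩]
    omega

lemma walk_eq_aCnt {n : ℕ} (C : TwoChainCover n) (e : Fin n ≃ Fin n) :
    ∀ {t : ℕ}, t ≤ n → C.walk e t = 2 * (aCnt C e t : ℤ) - t := by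
  intro t
  induction t with
  | zero => intro _; simp [walk_zero, aCnt]
  | succ t ih =>
    intro ht
    rw [walk_succ C e (by omega), aCnt_succ C e (by omega), ih (by omega)]
    split <;> push_cast <;> ring

section MK
variable {n : ℕ} {V W : ℕ → ℤ} (h : IsNonHitting n V W)

lemma mkCover_A_mem (x : Fin n) : x ∈ (mkCover n V W h).A ↔ (x:ℕ) < ups V n := by
  simp [mkCover]

lemma mkCover_lt_iff (x y : Fin n) : (mkCover n V W h).lt x y ↔
      (((x:ℕ) < ups V n ∧ (y:ℕ) < ups V n ∧ (x:ℕ) < (y:ℕ)) ∨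
      (ups V n ≤ (x:ℕ) ∧ ups V n ≤ (y:ℕ) ∧ (x:ℕ) < (y:ℕ)) ∨
      ((x:ℕ) < ups V n ∧ ups V n ≤ (y:ℕ) ∧ (x:ℕ) < ups W ((x:ℕ) + ((y:ℕ) - ups V n) + 1)) ∨
      (ups V n ≤ (x:ℕ) ∧ (y:ℕ) < ups V n ∧ ups V ((y:ℕ) + ((x:ℕ) - ups V n) + 1) ≤ (y:ℕ))) :=
  Iff.rfl

include h in
lemma s_le_n {x y : ℕ} (hx : x < ups V n) (hy : ups V n ≤ y) (hyn : y < n) :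
    x + (y - ups V n) + 1 ≤ n := by
  have := upsV_n_le h
  omega

include h in
lemma mkGreedy : (mkCover n V W h).GreedyPair (perm n V) (perm n W) := by
  have hq := upsW_n h
  refine ⟨?_, ?_, ?_⟩
  · intro x y hlt
    rcases hlt with ⟨hx, hy, hc⟩ | ⟨hx, hy, hc⟩ | ⟨hx, hy, hc⟩ | ⟨hx, hy, hc⟩
    · exact perm_lt_AA hx hy hc
    · exact perm_lt_BB hx hy hc
    · refine perm_lt_AB hx hy ?_
      have hs : x + ((y:ℕ) - ups V n) + 1 ≤ n := s_le_n h hx hy y.isLt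
      have := upsW_le_upsV h _ hs
      omega
    · exact perm_lt_BA hx hy hc
  · intro x y hlt
    rcases hlt with ⟨hx, hy, hc⟩ | ⟨hx, hy, hc⟩ | ⟨hx, hy, hc⟩ | ⟨hx, hy, hc⟩
    · exact perm_lt_AA (by omega) (by omega) hc
    · exact perm_lt_BB (by omega) (by omega) hc
    · refine perm_lt_AB (by omega) (by omega) ?_
      rw [hq]
      exact hc
    · refine perm_lt_BA (by omega) (by omega) ?_
      rw [hq]
      have hs : (y:ℕ) + ((x:ℕ) - ups V n) + 1 ≤ n := s_le_n h hy hx x.isLt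
      have := upsW_le_upsV h _ hs
      omega
  · intro a ha b hb hab hba
    rw [mkCover_A_mem] at ha hb
    push_neg at hb
    have h1 : ¬((a:ℕ) < ups W ((a:ℕ) + ((b:ℕ) - ups V n) + 1)) := fun hc =>
      hab (Or.inr (Or.inr (Or.inl ⟨ha, hb, hc⟩)))
    have h2 : ¬(ups V ((a:ℕ) + ((b:ℕ) - ups V n) + 1) ≤ (a:ℕ)) := fun hc =>
      hba (Or.inr (Or.inr (Or.inr ⟨hb, ha, hc⟩)))
    constructor
    · exact perm_lt_AB ha hb (by omega)
    · refine perm_lt_BA (by omega) (by omega) ?_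
      rw [hq]
      omega

/-- the canonical permutation of a walk `U` sharing endpoints realizes `U` as its walk -/
lemma mkWalk (U : ℕ → ℤ) (hU0 : U 0 = 0)
    (hUstep : ∀ t < n, U (t+1) - U t = 1 ∨ U (t+1) - U t = -1)
    (hUn : ups U n = ups V n) :
    ∀ t ≤ n, (mkCover n V W h).walk (perm n U) t = U t := by
  intro t
  induction t with
  | zero => intro _; rw [walk_zero, hU0]
  | succ t ih =>
    intro ht
    have ht' : t < n := by omega
    rw [walk_succ _ _ ht', ih (by omega)]
    have hmem : perm n U ⟨t, ht'⟩ ∈ (mkCover n V W h).A ↔ U (t+1) - U t = 1 := by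
      rw [mkCover_A_mem, ← hUn, perm_apply]
      unfold permFun
      by_cases hs : U (t+1) - U t = 1
      · rw [dif_pos (by simpa using hs)]
        simp only [Fin.val_mk]
        have h1 := ups_succ_up (V := U) (k := t) hs
        have h2 : ups U (t+1) ≤ ups U n := ups_mono U (by omega)
        constructor
        · intro _; exact hs
        · intro _; omega
      · rw [dif_neg (by simpa using hs)]
        simp only [Fin.val_mk]
        constructor
        · intro hc; omega
        · intro hc; exact absurd hc hs
    rcases hUstep t ht' with hs | hs
    · rw [if_pos (hmem.mpr hs)]
      omega
    · rw [if_neg (fun hc => by rw [hmem] at hc; omega)]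
      omega

lemma mkWalk_lam : ∀ t ≤ n, (mkCover n V W h).walk (perm n V) t = V t :=
  mkWalk h V h.1 (fun t ht => (h.2.2.1 t ht).1) rfl

lemma mkWalk_del : ∀ t ≤ n, (mkCover n V W h).walk (perm n W) t = W t :=
  mkWalk h W h.2.1 (fun t ht => (h.2.2.1 t ht).2) (upsW_n h)

end MK

/-! ### Connectivity of the canonical cover -/

lemma incomp_adj {n : ℕ} (C : TwoChainCover n) (x y : Fin n) :
    C.incompGraph.Adj x y ↔ x ≠ y ∧ ¬C.lt x y ∧ ¬C.lt y x := Iff.rfl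

lemma downs_succ_le (V : ℕ → ℤ) (t : ℕ) : downs V (t+1) ≤ downs V t + 1 := by
  have h1 := ups_succ V t
  have h2 := ups_le V t
  unfold downs
  omega

section CONN
variable {n : ℕ} {V W : ℕ → ℤ} (h : IsNonHitting n V W)
include h

lemma first_steps (hn2 : 2 ≤ n) : ups V 1 = 1 ∧ ups W 1 = 0 := by
  have hv := (h.2.2.1 0 (by omega)).1
  have hw := (h.2.2.1 0 (by omega)).2
  have h0v := h.1
  have h0w := h.2.1
  have hlt := h.2.2.2.2 1 (by omega) (by omega)
  have h1 := ups_succ V 0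
  have h2 := ups_succ W 0
  rw [ups_zero] at h1 h2
  norm_num at hv hw h1 h2
  constructor
  · rw [h1, if_pos (by omega)]
  · rw [h2, if_neg (by omega)]

lemma last_steps (hn2 : 2 ≤ n) :
    ups V (n-1) = ups V n ∧ ups W (n-1) + 1 = ups W n := by
  have hn1 : n - 1 + 1 = n := by omega
  have hv := (h.2.2.1 (n-1) (by omega)).1
  have hw := (h.2.2.1 (n-1) (by omega)).2
  rw [hn1] at hv hw
  have hlt := h.2.2.2.2 (n-1) (by omega) (by omega)
  have heq := h.2.2.2.1
  have h1 := ups_succ V (n-1)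
  have h2 := ups_succ W (n-1)
  rw [hn1] at h1 h2
  constructor
  · rw [h1, if_neg (by omega)]
    omega
  · rw [h2, if_pos (by omega)]

lemma p_pos (hn2 : 2 ≤ n) : 1 ≤ ups V n :=
  le_trans (by rw [(first_steps h hn2).1]) (ups_mono V (by omega))

lemma q_pos (hn2 : 2 ≤ n) : ups V n < n := by
  have h1 := (first_steps h hn2).2
  have h2 := upsW_n h
  have h3 : downs W 1 ≤ downs W n := downs_mono W (by omega)
  have h4 := ups_le W n
  unfold downs at h3
  omega

lemma mk_adj {x y : Fin n} (hx : (x:ℕ) < ups V n) (hy : ups V n ≤ (y:ℕ)) :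
    (mkCover n V W h).incompGraph.Adj x y ↔
      (ups W ((x:ℕ) + ((y:ℕ) - ups V n) + 1) ≤ (x:ℕ) ∧
        (x:ℕ) < ups V ((x:ℕ) + ((y:ℕ) - ups V n) + 1)) := by
  rw [incomp_adj, mkCover_lt_iff, mkCover_lt_iff]
  constructor
  · rintro ⟨hne, h1, h2⟩
    constructor
    · by_contra hc
      exact h1 (Or.inr (Or.inr (Or.inl ⟨hx, hy, by omega⟩)))
    · by_contra hc
      exact h2 (Or.inr (Or.inr (Or.inr ⟨hy, hx, by omega⟩)))
  · rintro ⟨h1, h2⟩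
    refine ⟨fun hc => by subst hc; omega, ?_, ?_⟩
    · rintro (⟨_, _, _⟩ | ⟨_, _, _⟩ | ⟨_, _, hc⟩ | ⟨_, _, _⟩) <;> omega
    · rintro (⟨_, _, _⟩ | ⟨_, _, _⟩ | ⟨_, _, _⟩ | ⟨_, _, hc⟩) <;> omega

lemma step_a (hn2 : 2 ≤ n) {i : ℕ} (hi : i + 1 < ups V n) :
    ∃ j < n - ups V n, (ups W (i+j+1) ≤ i ∧ i < ups V (i+j+1)) ∧
      (ups W ((i+1)+j+1) ≤ i+1 ∧ i+1 < ups V ((i+1)+j+1)) := by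
  have hex : ∃ t, i + 2 ≤ ups V t := ⟨n, by omega⟩
  set T := Nat.find hex with hT
  have h1 : i + 2 ≤ ups V T := Nat.find_spec hex
  have hT1 : 1 ≤ T := by
    rcases Nat.eq_zero_or_pos T with h0 | h0
    · rw [h0, ups_zero] at h1; omega
    · exact h0
  have h2 : ¬(i + 2 ≤ ups V (T-1)) := Nat.find_min hex (by omega)
  have h3 : ups V T ≤ ups V (T-1) + 1 := by
    have := ups_lipschitz V (T-1) T (by omega)
    omega
  have hTn : T ≤ n - 1 := Nat.find_min' hex (by rw [(last_steps h hn2).1]; omega)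
  have hs1 : ups V (T-1) = i + 1 := by omega
  have hsge : i + 1 ≤ T - 1 := by
    have := ups_le V (T-1)
    omega
  refine ⟨(T-1) - (i+1), ?_, ?_, ?_⟩
  · -- j < n - p
    have hd : downs V (T-1) ≤ downs V (n-1) := downs_mono V (by omega)
    have hlast := (last_steps h hn2).1
    have h4 := ups_le V (n-1)
    have h5 := upsV_n_le h
    unfold downs at hd
    omega
  · have hsum : i + ((T-1) - (i+1)) + 1 = T - 1 := by omega
    rw [hsum]
    have hk := key h (T-1) (by omega) (by omega)
    omega
  · have hsum : (i+1) + ((T-1) - (i+1)) + 1 = T := by omega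
    rw [hsum]
    have hk := key h T (by omega) (by omega)
    omega

lemma step_b (hn2 : 2 ≤ n) {j : ℕ} (hj : j + 1 < n - ups V n) :
    ∃ i < ups V n, (ups W (i+j+1) ≤ i ∧ i < ups V (i+j+1)) ∧
      (ups W (i+(j+1)+1) ≤ i ∧ i < ups V (i+(j+1)+1)) := by
  have hWn := upsW_n h
  have hex : ∃ t, j + 2 ≤ downs W t := ⟨n, by unfold downs; have := ups_le W n; omega⟩
  set T := Nat.find hex with hT
  have h1 : j + 2 ≤ downs W T := Nat.find_spec hex
  have hT1 : 1 ≤ T := by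
    rcases Nat.eq_zero_or_pos T with h0 | h0
    · rw [h0] at h1; unfold downs at h1; omega
    · exact h0
  have h2 : ¬(j + 2 ≤ downs W (T-1)) := Nat.find_min hex (by omega)
  have h3 : downs W T ≤ downs W (T-1) + 1 := by
    have := downs_succ_le W (T-1)
    rw [show T - 1 + 1 = T by omega] at this
    exact this
  have hTn : T ≤ n - 1 := by
    refine Nat.find_min' hex ?_
    have hlast := (last_steps h hn2).2
    have h4 := ups_le W (n-1)
    unfold downs
    omega
  have hs1 : downs W (T-1) = j + 1 := by omega
  refine ⟨ups W (T-1), ?_, ?_, ?_⟩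
  · have hk := key h (T-1) (by have := ups_le W (T-1); unfold downs at hs1; omega)
      (by omega)
    have := ups_mono V (show T - 1 ≤ n by omega)
    omega
  · have hsum : ups W (T-1) + j + 1 = T - 1 := by
      have := ups_le W (T-1)
      unfold downs at hs1
      omega
    rw [hsum]
    have hk := key h (T-1) (by omega) (by omega)
    omega
  · have hsum : ups W (T-1) + (j+1) + 1 = T := by
      have := ups_le W (T-1)
      unfold downs at hs1
      omega
    rw [hsum]
    have hk := key h T (by omega) (by omega)
    have hup : ups W T = ups W (T-1) := by
      have h5 := ups_lipschitz W (T-1) T (by omega)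
      have h6 := ups_mono W (show T - 1 ≤ T by omega)
      unfold downs at h1 hs1
      omega
    omega

lemma mk_onefactor (hn : 0 < n) : (mkCover n V W h).OneFactor := by
  have hne : Nonempty (Fin n) := ⟨⟨0, hn⟩⟩
  rcases Nat.lt_or_ge n 2 with hn2 | hn2
  · rw [OneFactor, SimpleGraph.connected_iff]
    refine ⟨fun x y => ?_, hne⟩
    have hxy : x = y := by
      apply Fin.ext
      have := x.isLt
      have := y.isLt
      omega
    rw [hxy]
  · have hp1 := p_pos h hn2
    have hq1 := q_pos h hn2
    set G := (mkCover n V W h).incompGraph with hG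
    set p := ups V n with hp
    have hadj : ∀ (i j : ℕ) (hi : i < p) (hj : j < n - p),
        (ups W (i+j+1) ≤ i ∧ i < ups V (i+j+1)) →
        G.Adj ⟨i, by omega⟩ ⟨p + j, by omega⟩ := by
      intro i j hi hj hc
      rw [hG, mk_adj h (by simpa using hi) (by simp only [Fin.val_mk]; omega)]
      simp only [Fin.val_mk]
      rw [show i + (p + j - p) + 1 = i + j + 1 by omega]
      exact hc
    -- every a_i is reachable from a_0
    have reachA : ∀ i (hi : i < p), G.Reachable ⟨0, by omega⟩ ⟨i, by omega⟩ := by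
      intro i
      induction i with
      | zero => intro _; exact SimpleGraph.Reachable.refl _
      | succ i ih =>
        intro hi
        obtain ⟨j, hj, hc1, hc2⟩ := step_a h hn2 hi
        have e1 := hadj i j (by omega) hj hc1
        have e2 := hadj (i+1) j hi hj hc2
        exact ((ih (by omega)).trans e1.reachable).trans e2.reachable.symm
    -- every b_j is reachable from b_0
    have reachB : ∀ j (hj : j < n - p), G.Reachable ⟨p, by omega⟩ ⟨p + j, by omega⟩ := by
      intro j
      induction j with
      | zero =>
        intro hj
        have : (⟨p + 0, by omega⟩ : Fin n) = ⟨p, by omega⟩ := by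
          apply Fin.ext; simp
        rw [this]
      | succ j ih =>
        intro hj
        obtain ⟨i, hi, hc1, hc2⟩ := step_b h hn2 hj
        have e1 := hadj i j (by omega) (by omega) hc1
        have e2 := hadj i (j+1) (by omega) hj hc2
        exact ((ih (by omega)).trans e1.reachable.symm).trans e2.reachable
    -- a_0 ~ b_0
    have hab : G.Adj ⟨0, by omega⟩ ⟨p, by omega⟩ := by
      have h1 := first_steps h hn2
      have := hadj 0 0 (by omega) (by omega) (by rw [h1.1, h1.2]; omega)
      have he : (⟨p + 0, by omega⟩ : Fin n) = ⟨p, by omega⟩ := by apply Fin.ext; simp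
      rwa [he] at this
    -- now preconnected
    have hreach : ∀ x : Fin n, G.Reachable ⟨0, by omega⟩ x := by
      intro x
      rcases Nat.lt_or_ge (x:ℕ) p with hx | hx
      · have := reachA (x:ℕ) hx
        have he : (⟨(x:ℕ), by omega⟩ : Fin n) = x := by apply Fin.ext; simp
        rwa [he] at this
      · have := reachB ((x:ℕ) - p) (by have := x.isLt; omega)
        have he : (⟨p + ((x:ℕ) - p), by omega⟩ : Fin n) = x := by
          apply Fin.ext; simp; omega
        rw [he] at this
        exact hab.reachable.trans this
    rw [OneFactor, SimpleGraph.connected_iff]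
    exact ⟨fun x y => (hreach x).symm.trans (hreach y), hne⟩

end CONN

/-! ### Part 1: the image is non-hitting -/

lemma chain_downset {n : ℕ} (C : TwoChainCover n) {pred : Fin n → Prop}
    (hch : ∀ x y, pred x → pred y → x ≠ y → C.lt x y ∨ C.lt y x)
    {S T : Finset (Fin n)} (hSp : ∀ x ∈ S, pred x) (hTp : ∀ x ∈ T, pred x)
    (hSd : ∀ x ∈ S, ∀ y, pred y → C.lt y x → y ∈ S)
    (hTd : ∀ x ∈ T, ∀ y, pred y → C.lt y x → y ∈ T)
    (hc : S.card ≤ T.card) : S ⊆ T := by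
  intro x hxS
  by_contra hxT
  have hsub : T ⊆ S.erase x := by
    intro y hyT
    have hyx : y ≠ x := fun hc => hxT (hc ▸ hyT)
    rcases hch y x (hTp y hyT) (hSp x hxS) hyx with hlt | hlt
    · exact Finset.mem_erase.mpr ⟨hyx, hSd x hxS y (hTp y hyT) hlt⟩
    · exact absurd (hTd y hyT x (hSp x hxS) hlt) hxT
  have h1 := Finset.card_le_card hsub
  rw [Finset.card_erase_of_mem hxS] at h1
  have h2 : 0 < S.card := Finset.card_pos.mpr ⟨x, hxS⟩
  omega

lemma exists_crossing {α : Type*} {G : SimpleGraph α} (P : Finset α) :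
    ∀ {u v : α}, G.Walk u v → u ∈ P → v ∉ P →
      ∃ x y, G.Adj x y ∧ x ∈ P ∧ y ∉ P := by
  intro u v w
  induction w with
  | nil => intro hu hv; exact absurd hu hv
  | @cons a b c hadj w ih =>
    intro hu hv
    by_cases hb : b ∈ P
    · exact ih hb hv
    · exact ⟨a, b, hadj, hu, hb⟩

section P1
variable {n : ℕ} {C : TwoChainCover n} {lam del : Fin n ≃ Fin n}

/-- prefix sets transported to the ground set -/
lemma card_prefix (e : Fin n ≃ Fin n) {t : ℕ} (ht : t ≤ n) :
    (Finset.univ.filter fun x : Fin n => ((e.symm x : Fin n) : ℕ) < t).card = t := by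
  have himg : (Finset.univ.filter fun x : Fin n => ((e.symm x : Fin n) : ℕ) < t)
      = (Finset.univ.filter fun k : Fin n => (k:ℕ) < t).image e := by
    ext x
    simp only [Finset.mem_filter, Finset.mem_univ, true_and, Finset.mem_image]
    constructor
    · intro hx; exact ⟨e.symm x, hx, e.apply_symm_apply x⟩
    · rintro ⟨k, hk, rfl⟩; simpa using hk
  rw [himg, Finset.card_image_of_injective _ e.injective, card_filter_lt ht]

lemma card_prefix_A (e : Fin n ≃ Fin n) (t : ℕ) :
    (Finset.univ.filter fun x : Fin n =>
      ((e.symm x : Fin n) : ℕ) < t ∧ x ∈ C.A).card = aCnt C e t := by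
  have himg : (Finset.univ.filter fun x : Fin n => ((e.symm x : Fin n) : ℕ) < t ∧ x ∈ C.A)
      = (Finset.univ.filter fun k : Fin n => (k:ℕ) < t ∧ e k ∈ C.A).image e := by
    ext x
    simp only [Finset.mem_filter, Finset.mem_univ, true_and, Finset.mem_image]
    constructor
    · intro hx
      refine ⟨e.symm x, ?_, e.apply_symm_apply x⟩
      rw [e.apply_symm_apply]
      exact hx
    · rintro ⟨k, hk, rfl⟩
      simpa using hk
  rw [himg, Finset.card_image_of_injective _ e.injective, aCnt]

lemma greedy_strict (hof : C.OneFactor) (hg : C.GreedyPair lam del)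
    {t : ℕ} (h0 : 0 < t) (ht : t < n) : C.walk del t < C.walk lam t := by
  have h1 := walk_eq_aCnt C lam (le_of_lt ht)
  have h2 := walk_eq_aCnt C del (le_of_lt ht)
  by_contra hcon
  push_neg at hcon
  have hcc : aCnt C lam t ≤ aCnt C del t := by omega
  classical
  set PA := Finset.univ.filter (fun x : Fin n => ((lam.symm x : Fin n) : ℕ) < t ∧ x ∈ C.A)
    with hPA
  set PB := Finset.univ.filter (fun x : Fin n => ((lam.symm x : Fin n) : ℕ) < t ∧ x ∉ C.A)
    with hPB
  set QA := Finset.univ.filter (fun x : Fin n => ((del.symm x : Fin n) : ℕ) < t ∧ x ∈ C.A)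
    with hQA
  set QB := Finset.univ.filter (fun x : Fin n => ((del.symm x : Fin n) : ℕ) < t ∧ x ∉ C.A)
    with hQB
  set P := Finset.univ.filter (fun x : Fin n => ((lam.symm x : Fin n) : ℕ) < t) with hP
  have hPA_card : PA.card = aCnt C lam t := card_prefix_A lam t
  have hQA_card : QA.card = aCnt C del t := card_prefix_A del t
  have hP_card : P.card = t := card_prefix lam (le_of_lt ht)
  have hQ_card :
      (Finset.univ.filter fun x : Fin n => ((del.symm x : Fin n) : ℕ) < t).card = t :=
    card_prefix del (le_of_lt ht)
  have hsplitP : PA.card + PB.card = t := by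
    rw [← hP_card, hP, hPA, hPB]
    rw [show (Finset.univ.filter fun x : Fin n => ((lam.symm x : Fin n) : ℕ) < t ∧ x ∈ C.A)
        = (Finset.univ.filter fun x : Fin n => ((lam.symm x : Fin n) : ℕ) < t).filter
            (fun x => x ∈ C.A) by rw [Finset.filter_filter]]
    rw [show (Finset.univ.filter fun x : Fin n => ((lam.symm x : Fin n) : ℕ) < t ∧ x ∉ C.A)
        = (Finset.univ.filter fun x : Fin n => ((lam.symm x : Fin n) : ℕ) < t).filter
            (fun x => x ∉ C.A) by rw [Finset.filter_filter]]
    exact Finset.card_filter_add_card_filter_not _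
  have hsplitQ : QA.card + QB.card = t := by
    rw [← hQ_card, hQA, hQB]
    rw [show (Finset.univ.filter fun x : Fin n => ((del.symm x : Fin n) : ℕ) < t ∧ x ∈ C.A)
        = (Finset.univ.filter fun x : Fin n => ((del.symm x : Fin n) : ℕ) < t).filter
            (fun x => x ∈ C.A) by rw [Finset.filter_filter]]
    rw [show (Finset.univ.filter fun x : Fin n => ((del.symm x : Fin n) : ℕ) < t ∧ x ∉ C.A)
        = (Finset.univ.filter fun x : Fin n => ((del.symm x : Fin n) : ℕ) < t).filter
            (fun x => x ∉ C.A) by rw [Finset.filter_filter]]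
    exact Finset.card_filter_add_card_filter_not _
  -- PA ⊆ QA
  have hPAQA : PA ⊆ QA := by
    apply chain_downset C (pred := fun x => x ∈ C.A)
      (fun x y hx hy hxy => C.chainA x hx y hy hxy)
    · intro x hx; exact (Finset.mem_filter.mp hx).2.2
    · intro x hx; exact (Finset.mem_filter.mp hx).2.2
    · intro x hx y hy hlt
      simp only [hPA, Finset.mem_filter, Finset.mem_univ, true_and] at *
      exact ⟨lt_trans (hg.1 y x hlt) hx.1, hy⟩
    · intro x hx y hy hlt
      simp only [hQA, Finset.mem_filter, Finset.mem_univ, true_and] at *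
      exact ⟨lt_trans (hg.2.1 y x hlt) hx.1, hy⟩
    · omega
  -- QB ⊆ PB
  have hQBPB : QB ⊆ PB := by
    apply chain_downset C (pred := fun x => x ∉ C.A)
      (fun x y hx hy hxy => C.chainB x y hx hy hxy)
    · intro x hx; exact (Finset.mem_filter.mp hx).2.2
    · intro x hx; exact (Finset.mem_filter.mp hx).2.2
    · intro x hx y hy hlt
      simp only [hQB, Finset.mem_filter, Finset.mem_univ, true_and] at *
      exact ⟨lt_trans (hg.2.1 y x hlt) hx.1, hy⟩
    · intro x hx y hy hlt
      simp only [hPB, Finset.mem_filter, Finset.mem_univ, true_and] at *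
      exact ⟨lt_trans (hg.1 y x hlt) hx.1, hy⟩
    · omega
  -- find a crossing incomparable pair
  obtain ⟨u, hu⟩ : ∃ u, u ∈ P := by
    apply Finset.card_pos.mp
    omega
  obtain ⟨v, hv⟩ : ∃ v, v ∉ P := by
    by_contra hall
    push_neg at hall
    have : Finset.univ ⊆ P := fun x _ => hall x
    have := Finset.card_le_card this
    rw [Finset.card_univ, Fintype.card_fin] at this
    omega
  obtain ⟨w⟩ := hof.preconnected u v
  obtain ⟨x, y, hadj, hxP, hyP⟩ := exists_crossing P w hu hv
  obtain ⟨hne, hnlt1, hnlt2⟩ := hadj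
  by_cases hxA : x ∈ C.A <;> by_cases hyA : y ∈ C.A
  · rcases C.chainA x hxA y hyA hne with hl | hl
    exacts [hnlt1 hl, hnlt2 hl]
  · obtain ⟨hl, hd⟩ := hg.2.2 x hxA y hyA hnlt1 hnlt2
    have hxQA : x ∈ QA := hPAQA (by
      simp only [hPA, Finset.mem_filter, Finset.mem_univ, true_and]
      exact ⟨by simpa [hP] using hxP, hxA⟩)
    have hxQ : ((del.symm x : Fin n) : ℕ) < t := by
      simp only [hQA, Finset.mem_filter] at hxQA
      exact hxQA.2.1
    have hyQB : y ∈ QB := by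
      simp only [hQB, Finset.mem_filter, Finset.mem_univ, true_and]
      have : ((del.symm y : Fin n) : ℕ) < ((del.symm x : Fin n) : ℕ) := hd
      exact ⟨by omega, hyA⟩
    have := hQBPB hyQB
    simp only [hPB, Finset.mem_filter, Finset.mem_univ, true_and] at this
    exact hyP (by simp only [hP, Finset.mem_filter, Finset.mem_univ, true_and]; exact this.1)
  · obtain ⟨hl, hd⟩ := hg.2.2 y hyA x hxA hnlt2 hnlt1
    have hxPv : ((lam.symm x : Fin n) : ℕ) < t := by simpa [hP] using hxP
    have : ((lam.symm y : Fin n) : ℕ) < t := lt_trans hl hxPv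
    exact hyP (by simp only [hP, Finset.mem_filter, Finset.mem_univ, true_and]; exact this)
  · rcases C.chainB x y hxA hyA hne with hl | hl
    exacts [hnlt1 hl, hnlt2 hl]

theorem part1 (hof : C.OneFactor) (hg : C.GreedyPair lam del) :
    IsNonHitting n (C.walk lam) (C.walk del) := by
  refine ⟨walk_zero C lam, walk_zero C del, ?_, ?_, ?_⟩
  · intro t ht
    constructor
    · rw [walk_succ C lam ht]
      split <;> [left; right] <;> ring
    · rw [walk_succ C del ht]
      split <;> [left; right] <;> ring
  · rw [walk_n, walk_n]
  · intro t h0 ht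
    exact greedy_strict hof hg h0 ht

end P1

/-! ### Part 3: ranks and characterization lemmas -/

noncomputable def rkA {n : ℕ} (C : TwoChainCover n) (x : Fin n) : ℕ :=
  (Finset.univ.filter fun y : Fin n => y ∈ C.A ∧ C.lt y x).card

noncomputable def rkB {n : ℕ} (C : TwoChainCover n) (x : Fin n) : ℕ :=
  (Finset.univ.filter fun y : Fin n => y ∉ C.A ∧ C.lt y x).card

section RK
variable {n : ℕ} {C : TwoChainCover n}

lemma bndA {x : Fin n} (hx : x ∈ C.A) : rkA C x < C.A.card := by
  have hsub : (Finset.univ.filter fun y : Fin n => y ∈ C.A ∧ C.lt y x) ⊆ C.A.erase x := by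
    intro y hy
    simp only [Finset.mem_filter, Finset.mem_univ, true_and] at hy
    exact Finset.mem_erase.mpr ⟨fun hc => C.irrefl x (hc ▸ hy.2), hy.1⟩
  have := Finset.card_le_card hsub
  rw [Finset.card_erase_of_mem hx] at this
  have : 0 < C.A.card := Finset.card_pos.mpr ⟨x, hx⟩
  unfold rkA
  omega

lemma bndB {x : Fin n} (hx : x ∉ C.A) : rkB C x < n - C.A.card := by
  have hsub : (Finset.univ.filter fun y : Fin n => y ∉ C.A ∧ C.lt y x) ⊆
      (Finset.univ \ C.A).erase x := by
    intro y hy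
    simp only [Finset.mem_filter, Finset.mem_univ, true_and] at hy
    exact Finset.mem_erase.mpr ⟨fun hc => C.irrefl x (hc ▸ hy.2),
      Finset.mem_sdiff.mpr ⟨Finset.mem_univ y, hy.1⟩⟩
  have h1 := Finset.card_le_card hsub
  rw [Finset.card_erase_of_mem (Finset.mem_sdiff.mpr ⟨Finset.mem_univ x, hx⟩),
    Finset.card_sdiff_of_subset (Finset.subset_univ _), Finset.card_univ, Fintype.card_fin] at h1
  have h2 : 0 < (Finset.univ \ C.A).card :=
    Finset.card_pos.mpr ⟨x, Finset.mem_sdiff.mpr ⟨Finset.mem_univ x, hx⟩⟩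
  rw [Finset.card_sdiff_of_subset (Finset.subset_univ _), Finset.card_univ, Fintype.card_fin] at h2
  unfold rkB
  omega

lemma cardA_le : C.A.card ≤ n := by
  have := Finset.card_le_card (Finset.subset_univ C.A)
  rwa [Finset.card_univ, Fintype.card_fin] at this

lemma monoA {x y : Fin n} (hx : x ∈ C.A) (hy : y ∈ C.A) :
    C.lt x y ↔ rkA C x < rkA C y := by
  constructor
  · intro hlt
    have hsub : insert x (Finset.univ.filter fun z : Fin n => z ∈ C.A ∧ C.lt z x) ⊆
        (Finset.univ.filter fun z : Fin n => z ∈ C.A ∧ C.lt z y) := by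
      intro z hz
      rcases Finset.mem_insert.mp hz with rfl | hz
      · simp only [Finset.mem_filter, Finset.mem_univ, true_and]
        exact ⟨hx, hlt⟩
      · simp only [Finset.mem_filter, Finset.mem_univ, true_and] at *
        exact ⟨hz.1, C.trans _ _ _ hz.2 hlt⟩
    have h1 := Finset.card_le_card hsub
    rw [Finset.card_insert_of_notMem (by
      simp only [Finset.mem_filter, Finset.mem_univ, true_and, not_and]
      intro _
      exact C.irrefl x)] at h1
    unfold rkA
    omega
  · intro hrk
    by_contra hnlt
    rcases eq_or_ne x y with rfl | hne
    · omega
    rcases C.chainA x hx y hy hne with hl | hl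
    · exact hnlt hl
    · have := (by
        constructor <;> intro h
        · exact h
        · exact h : C.lt y x ↔ C.lt y x)
      have h2 : rkA C y < rkA C x := by
        have hsub : insert y (Finset.univ.filter fun z : Fin n => z ∈ C.A ∧ C.lt z y) ⊆
            (Finset.univ.filter fun z : Fin n => z ∈ C.A ∧ C.lt z x) := by
          intro z hz
          rcases Finset.mem_insert.mp hz with rfl | hz
          · simp only [Finset.mem_filter, Finset.mem_univ, true_and]
            exact ⟨hy, hl⟩
          · simp only [Finset.mem_filter, Finset.mem_univ, true_and] at *
            exact ⟨hz.1, C.trans _ _ _ hz.2 hl⟩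
        have h1 := Finset.card_le_card hsub
        rw [Finset.card_insert_of_notMem (by
          simp only [Finset.mem_filter, Finset.mem_univ, true_and, not_and]
          intro _
          exact C.irrefl y)] at h1
        unfold rkA
        omega
      omega

lemma monoB {x y : Fin n} (hx : x ∉ C.A) (hy : y ∉ C.A) :
    C.lt x y ↔ rkB C x < rkB C y := by
  constructor
  · intro hlt
    have hsub : insert x (Finset.univ.filter fun z : Fin n => z ∉ C.A ∧ C.lt z x) ⊆
        (Finset.univ.filter fun z : Fin n => z ∉ C.A ∧ C.lt z y) := by
      intro z hz
      rcases Finset.mem_insert.mp hz with rfl | hz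
      · simp only [Finset.mem_filter, Finset.mem_univ, true_and]
        exact ⟨hx, hlt⟩
      · simp only [Finset.mem_filter, Finset.mem_univ, true_and] at *
        exact ⟨hz.1, C.trans _ _ _ hz.2 hlt⟩
    have h1 := Finset.card_le_card hsub
    rw [Finset.card_insert_of_notMem (by
      simp only [Finset.mem_filter, Finset.mem_univ, true_and, not_and]
      intro _
      exact C.irrefl x)] at h1
    unfold rkB
    omega
  · intro hrk
    by_contra hnlt
    rcases eq_or_ne x y with rfl | hne
    · omega
    rcases C.chainB x y hx hy hne with hl | hl
    · exact hnlt hl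
    · have h2 : rkB C y < rkB C x := by
        have hsub : insert y (Finset.univ.filter fun z : Fin n => z ∉ C.A ∧ C.lt z y) ⊆
            (Finset.univ.filter fun z : Fin n => z ∉ C.A ∧ C.lt z x) := by
          intro z hz
          rcases Finset.mem_insert.mp hz with rfl | hz
          · simp only [Finset.mem_filter, Finset.mem_univ, true_and]
            exact ⟨hy, hl⟩
          · simp only [Finset.mem_filter, Finset.mem_univ, true_and] at *
            exact ⟨hz.1, C.trans _ _ _ hz.2 hl⟩
        have h1 := Finset.card_le_card hsub
        rw [Finset.card_insert_of_notMem (by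
          simp only [Finset.mem_filter, Finset.mem_univ, true_and, not_and]
          intro _
          exact C.irrefl y)] at h1
        unfold rkB
        omega
      omega
end RK

section CROSS
variable {n : ℕ} {C : TwoChainCover n} {lam del : Fin n ≃ Fin n}

lemma mem_iff_rkA {e : Fin n ≃ Fin n} (hext : ∀ a b, C.lt a b → e.symm a < e.symm b)
    {x : Fin n} (hx : x ∈ C.A) {s : ℕ} :
    ((e.symm x : Fin n) : ℕ) < s ↔ rkA C x < aCnt C e s := by
  have hcard : (Finset.univ.filter fun z : Fin n =>
      ((e.symm z : Fin n) : ℕ) < s ∧ z ∈ C.A).card = aCnt C e s := card_prefix_A e s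
  constructor
  · intro hsx
    have hsub : insert x (Finset.univ.filter fun z : Fin n => z ∈ C.A ∧ C.lt z x) ⊆
        (Finset.univ.filter fun z : Fin n => ((e.symm z : Fin n) : ℕ) < s ∧ z ∈ C.A) := by
      intro z hz
      rcases Finset.mem_insert.mp hz with rfl | hz
      · simp only [Finset.mem_filter, Finset.mem_univ, true_and]
        exact ⟨hsx, hx⟩
      · simp only [Finset.mem_filter, Finset.mem_univ, true_and] at *
        exact ⟨by have := hext z x hz.2; rw [Fin.lt_def] at this; omega, hz.1⟩
    have h1 := Finset.card_le_card hsub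
    rw [Finset.card_insert_of_notMem (by
      simp only [Finset.mem_filter, Finset.mem_univ, true_and, not_and]
      intro _
      exact C.irrefl x), hcard] at h1
    unfold rkA
    omega
  · intro hrk
    by_contra hns
    push_neg at hns
    have hsub : (Finset.univ.filter fun z : Fin n =>
        ((e.symm z : Fin n) : ℕ) < s ∧ z ∈ C.A) ⊆
        (Finset.univ.filter fun z : Fin n => z ∈ C.A ∧ C.lt z x) := by
      intro z hz
      simp only [Finset.mem_filter, Finset.mem_univ, true_and] at *
      refine ⟨hz.2, ?_⟩
      have hne : z ≠ x := by
        intro hc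
        subst hc
        omega
      rcases C.chainA z hz.2 x hx hne with hl | hl
      · exact hl
      · exfalso
        have := hext x z hl
        rw [Fin.lt_def] at this
        omega
    have h1 := Finset.card_le_card hsub
    rw [hcard] at h1
    unfold rkA at hrk
    omega

variable (hg : C.GreedyPair lam del)
include hg

lemma cross1 {x y : Fin n} (hx : x ∈ C.A) (hy : y ∉ C.A) :
    C.lt x y ↔ rkA C x < aCnt C del (rkA C x + rkB C y + 1) := by
  set s := rkA C x + rkB C y + 1 with hs
  constructor
  · intro hlt
    refine (mem_iff_rkA hg.2.1 hx).mp ?_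
    have hxy := hg.2.1 x y hlt
    rw [Fin.lt_def] at hxy
    have hcard := card_prefix del (le_of_lt (del.symm x).isLt)
    have hsub : (Finset.univ.filter fun z : Fin n =>
        ((del.symm z : Fin n) : ℕ) < ((del.symm x : Fin n) : ℕ)) ⊆
        (Finset.univ.filter fun z : Fin n => z ∈ C.A ∧ C.lt z x) ∪
        (Finset.univ.filter fun z : Fin n => z ∉ C.A ∧ C.lt z y) := by
      intro z hz
      simp only [Finset.mem_filter, Finset.mem_univ, true_and, Finset.mem_union] at *
      have hne : z ≠ x := by
        intro hc
        subst hc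
        omega
      by_cases hzA : z ∈ C.A
      · left
        refine ⟨hzA, ?_⟩
        rcases C.chainA z hzA x hx hne with hl | hl
        · exact hl
        · exfalso
          have := hg.2.1 x z hl
          rw [Fin.lt_def] at this
          omega
      · right
        refine ⟨hzA, ?_⟩
        have hney : z ≠ y := by
          intro hc
          subst hc
          omega
        rcases C.chainB z y hzA hy hney with hl | hl
        · exact hl
        · exfalso
          have := hg.2.1 y z hl
          rw [Fin.lt_def] at this
          omega
    have h1 := Finset.card_le_card hsub
    have h2 := Finset.card_union_le
      (Finset.univ.filter fun z : Fin n => z ∈ C.A ∧ C.lt z x)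
      (Finset.univ.filter fun z : Fin n => z ∉ C.A ∧ C.lt z y)
    rw [hcard] at h1
    unfold rkA rkB at hs
    omega
  · intro hrk
    by_contra hnlt
    have hyx : ((del.symm y : Fin n) : ℕ) < ((del.symm x : Fin n) : ℕ) := by
      by_cases hl : C.lt y x
      · have := hg.2.1 y x hl
        rwa [Fin.lt_def] at this
      · have := (hg.2.2 x hx y hy hnlt hl).2
        rwa [Fin.lt_def] at this
    have hcard := card_prefix del (le_of_lt (del.symm x).isLt)
    have hsub : (Finset.univ.filter fun z : Fin n => z ∈ C.A ∧ C.lt z x) ∪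
        insert y (Finset.univ.filter fun z : Fin n => z ∉ C.A ∧ C.lt z y) ⊆
        (Finset.univ.filter fun z : Fin n =>
          ((del.symm z : Fin n) : ℕ) < ((del.symm x : Fin n) : ℕ)) := by
      intro z hz
      simp only [Finset.mem_filter, Finset.mem_univ, true_and, Finset.mem_union,
        Finset.mem_insert] at *
      rcases hz with hz | rfl | hz
      · have := hg.2.1 z x hz.2
        rw [Fin.lt_def] at this
        omega
      · exact hyx
      · have h3 := hg.2.1 z y hz.2
        rw [Fin.lt_def] at h3
        omega
    have h1 := Finset.card_le_card hsub
    rw [Finset.card_union_of_disjoint (by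
      rw [Finset.disjoint_left]
      intro z hz1 hz2
      simp only [Finset.mem_filter, Finset.mem_univ, true_and, Finset.mem_insert] at *
      rcases hz2 with rfl | hz2
      · exact hy hz1.1
      · exact hz2.1 hz1.1),
      Finset.card_insert_of_notMem (by
        simp only [Finset.mem_filter, Finset.mem_univ, true_and, not_and]
        intro _
        exact C.irrefl y), hcard] at h1
    have h2 : ¬(((del.symm x : Fin n) : ℕ) < s) := by
      unfold rkA rkB at hs
      omega
    rw [mem_iff_rkA hg.2.1 hx] at h2
    exact h2 hrk

lemma cross2 {x y : Fin n} (hx : x ∉ C.A) (hy : y ∈ C.A) :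
    C.lt x y ↔ aCnt C lam (rkA C y + rkB C x + 1) ≤ rkA C y := by
  set s := rkA C y + rkB C x + 1 with hs
  constructor
  · intro hlt
    have hxy := hg.1 x y hlt
    rw [Fin.lt_def] at hxy
    have hcard := card_prefix lam (le_of_lt (lam.symm y).isLt)
    have hsub : (Finset.univ.filter fun z : Fin n => z ∈ C.A ∧ C.lt z y) ∪
        insert x (Finset.univ.filter fun z : Fin n => z ∉ C.A ∧ C.lt z x) ⊆
        (Finset.univ.filter fun z : Fin n =>
          ((lam.symm z : Fin n) : ℕ) < ((lam.symm y : Fin n) : ℕ)) := by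
      intro z hz
      simp only [Finset.mem_filter, Finset.mem_univ, true_and, Finset.mem_union,
        Finset.mem_insert] at *
      rcases hz with hz | rfl | hz
      · have := hg.1 z y hz.2
        rw [Fin.lt_def] at this
        omega
      · exact hxy
      · have h3 := hg.1 z y (C.trans _ _ _ hz.2 hlt)
        rw [Fin.lt_def] at h3
        omega
    have h1 := Finset.card_le_card hsub
    rw [Finset.card_union_of_disjoint (by
      rw [Finset.disjoint_left]
      intro z hz1 hz2
      simp only [Finset.mem_filter, Finset.mem_univ, true_and, Finset.mem_insert] at *
      rcases hz2 with rfl | hz2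
      · exact hx hz1.1
      · exact hz2.1 hz1.1),
      Finset.card_insert_of_notMem (by
        simp only [Finset.mem_filter, Finset.mem_univ, true_and, not_and]
        intro _
        exact C.irrefl x), hcard] at h1
    have h2 : ¬(((lam.symm y : Fin n) : ℕ) < s) := by
      unfold rkA rkB at hs
      omega
    rw [mem_iff_rkA hg.1 hy] at h2
    omega
  · intro hrk
    by_contra hnlt
    have hyx : ((lam.symm y : Fin n) : ℕ) < ((lam.symm x : Fin n) : ℕ) := by
      by_cases hl : C.lt y x
      · have := hg.1 y x hl
        rwa [Fin.lt_def] at this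
      · have := (hg.2.2 y hy x hx hl hnlt).1
        rwa [Fin.lt_def] at this
    have hcard := card_prefix lam (le_of_lt (lam.symm y).isLt)
    have hsub : (Finset.univ.filter fun z : Fin n =>
        ((lam.symm z : Fin n) : ℕ) < ((lam.symm y : Fin n) : ℕ)) ⊆
        (Finset.univ.filter fun z : Fin n => z ∈ C.A ∧ C.lt z y) ∪
        (Finset.univ.filter fun z : Fin n => z ∉ C.A ∧ C.lt z x) := by
      intro z hz
      simp only [Finset.mem_filter, Finset.mem_univ, true_and, Finset.mem_union] at *
      have hne : z ≠ y := by
        intro hc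
        subst hc
        omega
      by_cases hzA : z ∈ C.A
      · left
        refine ⟨hzA, ?_⟩
        rcases C.chainA z hzA y hy hne with hl | hl
        · exact hl
        · exfalso
          have := hg.1 y z hl
          rw [Fin.lt_def] at this
          omega
      · right
        refine ⟨hzA, ?_⟩
        have hnex : z ≠ x := by
          intro hc
          subst hc
          omega
        rcases C.chainB z x hzA hx hnex with hl | hl
        · exact hl
        · exfalso
          have := hg.1 x z hl
          rw [Fin.lt_def] at this
          omega
    have h1 := Finset.card_le_card hsub
    have h2 := Finset.card_union_le
      (Finset.univ.filter fun z : Fin n => z ∈ C.A ∧ C.lt z y)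
      (Finset.univ.filter fun z : Fin n => z ∉ C.A ∧ C.lt z x)
    rw [hcard] at h1
    have h3 : ((lam.symm y : Fin n) : ℕ) < s := by
      unfold rkA rkB at hs
      omega
    rw [mem_iff_rkA hg.1 hy] at h3
    omega

end CROSS

section ISO
variable {n : ℕ} {C : TwoChainCover n} {lam del : Fin n ≃ Fin n}

lemma ups_eq_aCnt (e : Fin n ≃ Fin n) {U : ℕ → ℤ} (hm : ∀ t ≤ n, C.walk e t = U t) :
    ∀ t ≤ n, ups U t = aCnt C e t := by
  intro t
  induction t with
  | zero => intro _; rw [ups_zero]; simp [aCnt]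
  | succ t ih =>
    intro ht
    have ht' : t < n := by omega
    have hd : U (t+1) - U t = (if e ⟨t, ht'⟩ ∈ C.A then 1 else -1) := by
      rw [← hm (t+1) ht, ← hm t (by omega), walk_succ C e ht']
      ring
    rw [ups_succ, aCnt_succ C e ht', ih (by omega)]
    by_cases hmem : e ⟨t, ht'⟩ ∈ C.A
    · rw [if_pos hmem] at hd
      rw [if_pos (by omega), if_pos hmem]
    · rw [if_neg hmem] at hd
      rw [if_neg (by omega), if_neg hmem]

lemma cardA_eq (e : Fin n ≃ Fin n) : aCnt C e n = C.A.card := by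
  unfold aCnt
  rw [show (Finset.univ.filter fun k : Fin n => (k:ℕ) < n ∧ e k ∈ C.A)
      = (Finset.univ.filter fun k : Fin n => e k ∈ C.A) by
    ext k; simp [k.isLt]]
  have himg : Finset.image e (Finset.univ.filter fun k : Fin n => e k ∈ C.A) = C.A := by
    ext x
    simp only [Finset.mem_image, Finset.mem_filter, Finset.mem_univ, true_and]
    constructor
    · rintro ⟨k, hk, rfl⟩; exact hk
    · intro hx; exact ⟨e.symm x, by rwa [e.apply_symm_apply], e.apply_symm_apply x⟩
  rw [← Finset.card_image_of_injective _ e.injective, himg]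

lemma iso_mk (hg : C.GreedyPair lam del) {V W : ℕ → ℤ} (hVW : IsNonHitting n V W)
    (hmV : ∀ t ≤ n, C.walk lam t = V t) (hmW : ∀ t ≤ n, C.walk del t = W t) :
    CoverIso C (mkCover n V W hVW) := by
  have hupsV : ∀ t ≤ n, ups V t = aCnt C lam t := ups_eq_aCnt lam hmV
  have hupsW : ∀ t ≤ n, ups W t = aCnt C del t := ups_eq_aCnt del hmW
  have hp : ups V n = C.A.card := by rw [hupsV n le_rfl, cardA_eq lam]
  have hAle : C.A.card ≤ n := cardA_le
  have hbnd : ∀ x : Fin n, (if x ∈ C.A then rkA C x else C.A.card + rkB C x) < n := by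
    intro x
    by_cases hx : x ∈ C.A
    · rw [if_pos hx]
      have := bndA hx
      omega
    · rw [if_neg hx]
      have := bndB hx
      omega
  set f : Fin n → Fin n :=
    fun x => ⟨if x ∈ C.A then rkA C x else C.A.card + rkB C x, hbnd x⟩ with hf
  have hinj : Function.Injective f := by
    intro x y hxy
    have hv : (if x ∈ C.A then rkA C x else C.A.card + rkB C x)
        = (if y ∈ C.A then rkA C y else C.A.card + rkB C y) := congrArg Fin.val hxy
    by_cases hx : x ∈ C.A <;> by_cases hy : y ∈ C.A
    · rw [if_pos hx, if_pos hy] at hv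
      by_contra hne
      rcases C.chainA x hx y hy hne with hl | hl
      · have := (monoA hx hy).mp hl; omega
      · have := (monoA hy hx).mp hl; omega
    · rw [if_pos hx, if_neg hy] at hv
      have := bndA hx
      omega
    · rw [if_neg hx, if_pos hy] at hv
      have := bndA hy
      omega
    · rw [if_neg hx, if_neg hy] at hv
      by_contra hne
      rcases C.chainB x y hx hy hne with hl | hl
      · have := (monoB hx hy).mp hl; omega
      · have := (monoB hy hx).mp hl; omega
  refine ⟨Equiv.ofBijective f (Finite.injective_iff_bijective.mp hinj), ?_, ?_⟩
  · intro x y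
    have hvx : ((Equiv.ofBijective f (Finite.injective_iff_bijective.mp hinj) x : Fin n) : ℕ)
        = if x ∈ C.A then rkA C x else C.A.card + rkB C x := rfl
    have hvy : ((Equiv.ofBijective f (Finite.injective_iff_bijective.mp hinj) y : Fin n) : ℕ)
        = if y ∈ C.A then rkA C y else C.A.card + rkB C y := rfl
    rw [mkCover_lt_iff, hvx, hvy]
    by_cases hx : x ∈ C.A <;> by_cases hy : y ∈ C.A
    · -- A A
      rw [if_pos hx, if_pos hy]
      have hbx := bndA hx
      have hby := bndA hy
      constructor
      · intro hlt
        exact Or.inl ⟨by omega, by omega, (monoA hx hy).mp hlt⟩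
      · rintro (⟨_, _, hc⟩ | ⟨h1, _, _⟩ | ⟨_, h1, _⟩ | ⟨h1, _, _⟩)
        · exact (monoA hx hy).mpr hc
        all_goals omega
    · -- A B
      rw [if_pos hx, if_neg hy]
      have hbx := bndA hx
      have hby := bndB hy
      have hs : rkA C x + rkB C y + 1 ≤ n := by omega
      have hseq : rkA C x + (C.A.card + rkB C y - ups V n) + 1 = rkA C x + rkB C y + 1 := by
        omega
      have hW := hupsW (rkA C x + rkB C y + 1) hs
      rw [cross1 hg hx hy]
      constructor
      · intro hc
        refine Or.inr (Or.inr (Or.inl ⟨by omega, by omega, ?_⟩))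
        rw [hseq, hW]
        exact hc
      · rintro (⟨_, h1, _⟩ | ⟨h1, _, _⟩ | ⟨_, _, hc⟩ | ⟨_, h1, _⟩)
        · omega
        · omega
        · rw [hseq, hW] at hc
          exact hc
        · omega
    · -- B A
      rw [if_neg hx, if_pos hy]
      have hbx := bndB hx
      have hby := bndA hy
      have hs : rkA C y + rkB C x + 1 ≤ n := by omega
      have hseq : rkA C y + (C.A.card + rkB C x - ups V n) + 1 = rkA C y + rkB C x + 1 := by
        omega
      have hV := hupsV (rkA C y + rkB C x + 1) hs
      rw [cross2 hg hx hy]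
      constructor
      · intro hc
        refine Or.inr (Or.inr (Or.inr ⟨by omega, by omega, ?_⟩))
        rw [hseq, hV]
        exact hc
      · rintro (⟨h1, _, _⟩ | ⟨_, h1, _⟩ | ⟨h1, _, _⟩ | ⟨_, _, hc⟩)
        · omega
        · omega
        · omega
        · rw [hseq, hV] at hc
          exact hc
    · -- B B
      rw [if_neg hx, if_neg hy]
      have hbx := bndB hx
      have hby := bndB hy
      constructor
      · intro hlt
        exact Or.inr (Or.inl ⟨by omega, by omega, by
          have := (monoB hx hy).mp hlt
          omega⟩)
      · rintro (⟨h1, _, _⟩ | ⟨_, _, hc⟩ | ⟨h1, _, _⟩ | ⟨_, h1, _⟩)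
        · omega
        · exact (monoB hx hy).mpr (by omega)
        all_goals omega
  · intro x
    rw [mkCover_A_mem]
    have hvx : ((Equiv.ofBijective f (Finite.injective_iff_bijective.mp hinj) x : Fin n) : ℕ)
        = if x ∈ C.A then rkA C x else C.A.card + rkB C x := rfl
    rw [hvx]
    by_cases hx : x ∈ C.A
    · rw [if_pos hx]
      have := bndA hx
      simp only [hx, true_iff]
      omega
    · rw [if_neg hx]
      simp only [hx, false_iff, not_lt]
      omega

end ISO

/-! ### Uniqueness of the greedy pair -/

lemma fin_strictMono_id {n : ℕ} (f : Fin n ≃ Fin n) (hf : StrictMono (f : Fin n → Fin n)) :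
    ∀ k, f k = k := by
  have hle : ∀ (g : Fin n ≃ Fin n), StrictMono (g : Fin n → Fin n) →
      ∀ k : Fin n, (k:ℕ) ≤ ((g k : Fin n) : ℕ) := by
    intro g hg
    have H : ∀ m, ∀ k : Fin n, (k:ℕ) = m → m ≤ ((g k : Fin n) : ℕ) := by
      intro m
      induction m with
      | zero => intro k _; omega
      | succ m ih =>
        intro k hk
        have hm : m < n := by have := k.isLt; omega
        have h1 : (⟨m, hm⟩ : Fin n) < k := by
          rw [Fin.lt_def]
          simp only [Fin.val_mk]
          omega
        have h2 := hg h1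
        rw [Fin.lt_def] at h2
        have h3 := ih ⟨m, hm⟩ (by simp)
        omega
    intro k
    exact H (k:ℕ) k rfl
  have hsymm : StrictMono (f.symm : Fin n → Fin n) := by
    intro a b hab
    rcases lt_trichotomy (f.symm a) (f.symm b) with hc | hc | hc
    · exact hc
    · exfalso
      have : a = b := by
        have := congrArg f hc
        simpa using this
      exact absurd hab (by rw [this]; exact lt_irrefl b)
    · exfalso
      have := hf hc
      simp only [Equiv.apply_symm_apply] at this
      exact absurd hab (by omega)
  intro k
  have h1 := hle f hf k
  have h2 := hle f.symm hsymm (f k)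
  rw [f.symm_apply_apply] at h2
  apply Fin.ext
  omega

section UNIQ
variable {n : ℕ} {C : TwoChainCover n} {lam del lam2 del2 : Fin n ≃ Fin n}

lemma greedy_unique (hg : C.GreedyPair lam del) (hg2 : C.GreedyPair lam2 del2) :
    (∀ k, lam k = lam2 k) ∧ (∀ k, del k = del2 k) := by
  constructor
  · have hmono : StrictMono ((lam.trans lam2.symm : Fin n ≃ Fin n) : Fin n → Fin n) := by
      intro k k' hkk
      show lam2.symm (lam k) < lam2.symm (lam k')
      set x := lam k with hxd
      set y := lam k' with hyd
      have hxs : lam.symm x = k := lam.symm_apply_apply k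
      have hys : lam.symm y = k' := lam.symm_apply_apply k'
      have hne : x ≠ y := by
        intro hc
        rw [hxd, hyd] at hc
        have := lam.injective hc
        rw [this] at hkk
        exact lt_irrefl _ hkk
      by_cases hl1 : C.lt x y
      · exact hg2.1 x y hl1
      by_cases hl2 : C.lt y x
      · exfalso
        have := hg.1 y x hl2
        rw [hxs, hys] at this
        exact absurd hkk (by omega)
      by_cases hxA : x ∈ C.A <;> by_cases hyA : y ∈ C.A
      · rcases C.chainA x hxA y hyA hne with hl | hl <;> [exact absurd hl hl1;
          exact absurd hl hl2]
      · exact (hg2.2.2 x hxA y hyA hl1 hl2).1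
      · exfalso
        have := (hg.2.2 y hyA x hxA hl2 hl1).1
        rw [hxs, hys] at this
        exact absurd hkk (by omega)
      · rcases C.chainB x y hxA hyA hne with hl | hl <;> [exact absurd hl hl1;
          exact absurd hl hl2]
    intro k
    have h := fin_strictMono_id (lam.trans lam2.symm) hmono k
    have h2 := congrArg lam2 h
    simpa using h2
  · have hmono : StrictMono ((del.trans del2.symm : Fin n ≃ Fin n) : Fin n → Fin n) := by
      intro k k' hkk
      show del2.symm (del k) < del2.symm (del k')
      set x := del k with hxd
      set y := del k' with hyd
      have hxs : del.symm x = k := del.symm_apply_apply k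
      have hys : del.symm y = k' := del.symm_apply_apply k'
      have hne : x ≠ y := by
        intro hc
        rw [hxd, hyd] at hc
        have := del.injective hc
        rw [this] at hkk
        exact lt_irrefl _ hkk
      by_cases hl1 : C.lt x y
      · exact hg2.2.1 x y hl1
      by_cases hl2 : C.lt y x
      · exfalso
        have := hg.2.1 y x hl2
        rw [hxs, hys] at this
        exact absurd hkk (by omega)
      by_cases hxA : x ∈ C.A <;> by_cases hyA : y ∈ C.A
      · rcases C.chainA x hxA y hyA hne with hl | hl <;> [exact absurd hl hl1;
          exact absurd hl hl2]
      · exfalso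
        have := (hg.2.2 x hxA y hyA hl1 hl2).2
        rw [hxs, hys] at this
        exact absurd hkk (by omega)
      · exact (hg2.2.2 y hyA x hxA hl2 hl1).2
      · rcases C.chainB x y hxA hyA hne with hl | hl <;> [exact absurd hl hl1;
          exact absurd hl hl2]
    intro k
    have h := fin_strictMono_id (del.trans del2.symm) hmono k
    have h2 := congrArg del2 h
    simpa using h2

end UNIQ

/-! ### CoverIso is symmetric, transitive, and implies equal walks -/

lemma coverIso_symm {n : ℕ} {C C' : TwoChainCover n} (h : CoverIso C C') : CoverIso C' C := by
  obtain ⟨e, h1, h2⟩ := h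
  refine ⟨e.symm, fun x y => ?_, fun x => ?_⟩
  · have := h1 (e.symm x) (e.symm y)
    simp only [Equiv.apply_symm_apply] at this
    exact this.symm
  · have := h2 (e.symm x)
    simp only [Equiv.apply_symm_apply] at this
    exact this.symm

lemma coverIso_trans {n : ℕ} {C C' C'' : TwoChainCover n}
    (h : CoverIso C C') (h' : CoverIso C' C'') : CoverIso C C'' := by
  obtain ⟨e, h1, h2⟩ := h
  obtain ⟨e', h1', h2'⟩ := h'
  refine ⟨e.trans e', fun x y => ?_, fun x => ?_⟩
  · exact (h1 x y).trans (h1' (e x) (e y))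
  · exact (h2 x).trans (h2' (e x))

lemma coverIso_walks {n : ℕ} {C C' : TwoChainCover n} {lam del lam' del' : Fin n ≃ Fin n}
    (hg : C.GreedyPair lam del) (hg' : C'.GreedyPair lam' del') (hiso : CoverIso C C') :
    ∀ t, C.walk lam t = C'.walk lam' t ∧ C.walk del t = C'.walk del' t := by
  obtain ⟨e, he1, he2⟩ := hiso
  have hsym : ∀ (f : Fin n ≃ Fin n) (x : Fin n), (f.trans e.symm).symm x = f.symm (e x) := by
    intro f x
    simp [Equiv.symm_trans_apply]
  have hg2 : C.GreedyPair (lam'.trans e.symm) (del'.trans e.symm) := by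
    refine ⟨?_, ?_, ?_⟩
    · intro x y hlt
      rw [Fin.lt_def, hsym, hsym, ← Fin.lt_def]
      exact hg'.1 _ _ ((he1 x y).mp hlt)
    · intro x y hlt
      rw [Fin.lt_def, hsym, hsym, ← Fin.lt_def]
      exact hg'.2.1 _ _ ((he1 x y).mp hlt)
    · intro a ha b hb hn1 hn2
      have := hg'.2.2 (e a) ((he2 a).mp ha) (e b) (fun hc => hb ((he2 b).mpr hc))
        (fun hc => hn1 ((he1 a b).mpr hc)) (fun hc => hn2 ((he1 b a).mpr hc))
      constructor
      · rw [Fin.lt_def, hsym, hsym, ← Fin.lt_def]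
        exact this.1
      · rw [Fin.lt_def, hsym, hsym, ← Fin.lt_def]
        exact this.2
  obtain ⟨hL, hD⟩ := greedy_unique hg hg2
  have happ : ∀ k, lam' k = e (lam k) := by
    intro k
    have := hL k
    simp only [Equiv.trans_apply] at this
    rw [this, e.apply_symm_apply]
  have happD : ∀ k, del' k = e (del k) := by
    intro k
    have := hD k
    simp only [Equiv.trans_apply] at this
    rw [this, e.apply_symm_apply]
  intro t
  constructor
  · unfold TwoChainCover.walk
    apply Finset.sum_congr rfl
    intro k _
    by_cases hm : lam k ∈ C.A
    · rw [if_pos hm, if_pos (by rw [happ k]; exact (he2 _).mp hm)]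
    · rw [if_neg hm, if_neg (by rw [happ k]; exact fun hc => hm ((he2 _).mpr hc))]
  · unfold TwoChainCover.walk
    apply Finset.sum_congr rfl
    intro k _
    by_cases hm : del k ∈ C.A
    · rw [if_pos hm, if_pos (by rw [happD k]; exact (he2 _).mp hm)]
    · rw [if_neg hm, if_neg (by rw [happD k]; exact fun hc => hm ((he2 _).mpr hc))]
end Gamma

open TwoChainCover in
/-- The map `Γ`, sending a one-factor two-chain cover with greedy pair `(λ, δ)` to the
pair of walks `(V, W)` stepping up at time `i` iff `λ_i ∈ A` (resp. `δ_i ∈ A`), is a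
bijection from unlabeled one-factor two-chain covers on `n` elements onto the set of
non-hitting pairs of walks of length `n`: it lands in the non-hitting pairs, every
non-hitting pair is attained, and two one-factor covers have the same image if and only
if they are isomorphic. -/
theorem gamma_bijection (n : ℕ) (hn : 0 < n) :
    (∀ (C : TwoChainCover n) (lam del : Fin n ≃ Fin n),
      C.OneFactor → C.GreedyPair lam del → IsNonHitting n (C.walk lam) (C.walk del)) ∧
    (∀ V W : ℕ → ℤ, IsNonHitting n V W →
      ∃ (C : TwoChainCover n) (lam del : Fin n ≃ Fin n),
        C.OneFactor ∧ C.GreedyPair lam del ∧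
          ∀ t ≤ n, C.walk lam t = V t ∧ C.walk del t = W t) ∧
    (∀ (C C' : TwoChainCover n) (lam del lam' del' : Fin n ≃ Fin n),
      C.OneFactor → C'.OneFactor → C.GreedyPair lam del → C'.GreedyPair lam' del' →
      ((∀ t, C.walk lam t = C'.walk lam' t ∧ C.walk del t = C'.walk del' t) ↔
        CoverIso C C')) := by
  
  refine ⟨?_, ?_, ?_⟩
  · intro C lam del hof hg
    exact Gamma.part1 hof hg
  · intro V W hVW
    exact ⟨Gamma.mkCover n V W hVW, Gamma.perm n V, Gamma.perm n W,
      Gamma.mk_onefactor hVW hn, Gamma.mkGreedy hVW,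
      fun t ht => ⟨Gamma.mkWalk_lam hVW t ht, Gamma.mkWalk_del hVW t ht⟩⟩
  · intro C C' lam del lam' del' hof hof' hg hg'
    constructor
    · intro hw
      have hnh : IsNonHitting n (C.walk lam) (C.walk del) := Gamma.part1 hof hg
      have h1 : CoverIso C (Gamma.mkCover n (C.walk lam) (C.walk del) hnh) :=
        Gamma.iso_mk hg hnh (fun t _ => rfl) (fun t _ => rfl)
      have h2 : CoverIso C' (Gamma.mkCover n (C.walk lam) (C.walk del) hnh) :=
        Gamma.iso_mk hg' hnh (fun t _ => ((hw t).1).symm) (fun t _ => ((hw t).2).symm)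
      exact Gamma.coverIso_trans h1 (Gamma.coverIso_symm h2)
    · intro hiso
      exact Gamma.coverIso_walks hg hg' hiso
end

section
/- Let (V,W) be a pair of non-hitting walks of length n arising from a two-chain cover C=(A,B,≺), and define τ(c)=|{y : y ⪯_C c}| for c∈[n]. Then for each time 1≤t≤n, the number of elements c∈[n] with τ(c)=t equals: 1 if the t-th increments of V and W are equal; 2 if (π_t(V),π_t(W))=(+1,−1); and 0 if (π_t(V),π_t(W))=(−1,+1). -/
open scoped Classical

open Finset in
private lemma card_symm_le_aux {n : ℕ} (e : Fin n ≃ Fin n) (k : Fin n) :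
    (Finset.univ.filter fun y : Fin n => e.symm y ≤ k).card = (k : ℕ) + 1 := by
  have h : (Finset.univ.filter fun y : Fin n => e.symm y ≤ k)
      = (Finset.Iic k).map e.toEmbedding := by
    ext y
    simp only [Finset.mem_filter, Finset.mem_univ, true_and, Finset.mem_map,
      Finset.mem_Iic, Equiv.coe_toEmbedding]
    constructor
    · intro h; exact ⟨e.symm y, h, by simp⟩
    · rintro ⟨j, hj, rfl⟩; simpa using hj
  rw [h, Finset.card_map]
  simp

private lemma tau_eq_aux {n : ℕ} (C : TwoChainCover n) (lam del : Fin n ≃ Fin n)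
    (hg : C.GreedyPair lam del) (c : Fin n) :
    C.tau c = (if c ∈ C.A then ((lam.symm c : Fin n) : ℕ) else ((del.symm c : Fin n) : ℕ)) + 1 := by
  obtain ⟨hl, hd, hgr⟩ := hg
  by_cases hc : c ∈ C.A
  · simp only [hc, if_pos]
    have hset : (Finset.univ.filter fun y : Fin n => C.lt y c ∨ y = c)
        = Finset.univ.filter fun y => lam.symm y ≤ lam.symm c := by
      ext y
      simp only [Finset.mem_filter, Finset.mem_univ, true_and]
      constructor
      · rintro (h | rfl)
        · exact le_of_lt (hl _ _ h)
        · exact le_rfl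
      · intro h
        by_cases hy : y = c
        · exact Or.inr hy
        · left
          have hne : lam.symm y < lam.symm c :=
            lt_of_le_of_ne h (fun he => hy (by
              have := congrArg lam he; simpa using this))
          by_cases hyA : y ∈ C.A
          · rcases C.chainA y hyA c hc hy with h' | h'
            · exact h'
            · exact absurd (hl _ _ h') (lt_asymm hne)
          · by_cases h1 : C.lt y c
            · exact h1
            · by_cases h2 : C.lt c y
              · exact absurd (hl _ _ h2) (lt_asymm hne)
              · exact absurd (hgr c hc y hyA h2 h1).1 (lt_asymm hne)
    rw [TwoChainCover.tau, hset, card_symm_le_aux]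
  · simp only [hc, if_neg, if_false]
    have hset : (Finset.univ.filter fun y : Fin n => C.lt y c ∨ y = c)
        = Finset.univ.filter fun y => del.symm y ≤ del.symm c := by
      ext y
      simp only [Finset.mem_filter, Finset.mem_univ, true_and]
      constructor
      · rintro (h | rfl)
        · exact le_of_lt (hd _ _ h)
        · exact le_rfl
      · intro h
        by_cases hy : y = c
        · exact Or.inr hy
        · left
          have hne : del.symm y < del.symm c :=
            lt_of_le_of_ne h (fun he => hy (by
              have := congrArg del he; simpa using this))
          by_cases hyA : y ∈ C.A
          · by_cases h1 : C.lt y c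
            · exact h1
            · by_cases h2 : C.lt c y
              · exact absurd (hd _ _ h2) (lt_asymm hne)
              · exact absurd (hgr y hyA c hc h1 h2).2 (lt_asymm hne)
          · rcases C.chainB y c hyA hc hy with h' | h'
            · exact h'
            · exact absurd (hd _ _ h') (lt_asymm hne)
    rw [TwoChainCover.tau, hset, card_symm_le_aux]

open TwoChainCover in
/-- Let `C = (A, B, ≺)` be a one-factor two-chain cover with greedy pair `(λ, δ)` and
associated non-hitting walks `(V, W)`, and let `τ(c) = |{y : y ⪯_C c}|`.  Then for each
time `t = i + 1` (with `1 ≤ t ≤ n`), the number of elements `c` with `τ(c) = t` equals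
`1` if the `t`-th increments of `V` and `W` agree, `2` if they are `(+1, -1)`, and `0`
if they are `(-1, +1)`. -/
theorem card_tau_fiber (n : ℕ) (C : TwoChainCover n)
    (lam del : Fin n ≃ Fin n) (h1 : C.OneFactor) (hg : C.GreedyPair lam del) :
    ∀ i : Fin n,
      (Finset.univ.filter fun c : Fin n => C.tau c = (i : ℕ) + 1).card =
        if lam i ∈ C.A ↔ del i ∈ C.A then 1
        else if lam i ∈ C.A then 2
        else 0 := by
  intro i
  have key : ∀ c : Fin n, (C.tau c = (i : ℕ) + 1) ↔
      ((c = lam i ∧ lam i ∈ C.A) ∨ (c = del i ∧ del i ∉ C.A)) := by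
    intro c
    rw [tau_eq_aux C lam del hg c]
    by_cases hc : c ∈ C.A
    · simp only [hc, if_pos]
      constructor
      · intro h
        have he : lam.symm c = i := Fin.val_injective (by omega)
        have hce : c = lam i := by rw [← he]; simp
        exact Or.inl ⟨hce, hce ▸ hc⟩
      · rintro (⟨rfl, _⟩ | ⟨rfl, hA⟩)
        · simp
        · exact absurd hc hA
    · simp only [hc, if_neg, if_false]
      constructor
      · intro h
        have he : del.symm c = i := Fin.val_injective (by omega)
        have hce : c = del i := by rw [← he]; simp
        exact Or.inr ⟨hce, hce ▸ hc⟩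
      · rintro (⟨rfl, hA⟩ | ⟨rfl, _⟩)
        · exact absurd hA hc
        · simp
  rw [show (Finset.univ.filter fun c : Fin n => C.tau c = (i : ℕ) + 1)
      = Finset.univ.filter (fun c : Fin n =>
          (c = lam i ∧ lam i ∈ C.A) ∨ (c = del i ∧ del i ∉ C.A)) from
    Finset.filter_congr fun c _ => by rw [key c]]
  by_cases h1 : lam i ∈ C.A <;> by_cases h2 : del i ∈ C.A
  · simp [h1, h2, Finset.filter_eq']
  · have hne : lam i ≠ del i := fun h => h2 (h ▸ h1)
    simp only [h1, h2, and_true, not_false_iff, iff_false, if_true,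
      not_true, false_iff, if_false, and_false, or_false, false_or]
    rw [show (Finset.univ.filter fun c : Fin n => c = lam i ∨ c = del i) = {lam i, del i} by
      ext c; simp]
    rw [Finset.card_insert_of_notMem (by simp [hne]), Finset.card_singleton]
  · rw [if_neg (by simp [h1, h2]), if_neg h1]
    rw [show (Finset.univ.filter fun c : Fin n =>
        (c = lam i ∧ lam i ∈ C.A) ∨ (c = del i ∧ del i ∉ C.A)) = ∅ by
      ext c; simp [h1, h2]]
    simp
  · simp [h1, h2, Finset.filter_eq']
end
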